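/- arXiv:1410.8290 — 6 statements merged into one kernel-verified Lean document; each statement's English description precedes it below -/
import Mathlib

section
/- Let X₁ and Y be i.i.d. standard normal random variables and set X₂ = X₁/√2 + Y/√2, p₁ = Φ(X₁), p₂ = Φ(X₂). Then the conditional probability P(p₂ ≤ 1/2 ∣ p₁ ≤ 1/2) = 3/4 and P(p₂ ≤ 1/2 ∣ p₁ ≤ 1/4) = 7/8. -/
open MeasureTheory ProbabilityTheory Set ENNReal

noncomputable def G : Measure ℝ := gaussianReal 0 1

instance : IsProbabilityMeasure G := by unfold G; infer_instance

lemma gauss_singleton (x : ℝ) : G {x} = 0 :=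
  gaussianReal_absolutelyContinuous 0 one_ne_zero (Real.volume_singleton)

lemma gauss_Ioc_pos {a b : ℝ} (h : a < b) : 0 < G (Ioc a b) := by
  rcases eq_or_ne (G (Ioc a b)) 0 with h0 | h0
  · exfalso
    have := gaussianReal_absolutelyContinuous' 0 one_ne_zero h0
    rw [Real.volume_Ioc, ENNReal.ofReal_eq_zero, sub_nonpos] at this
    exact absurd this (not_le.mpr h)
  · exact pos_iff_ne_zero.mpr h0

lemma gauss_map_neg : G.map (fun x => -x) = G := by
  have := gaussianReal_map_const_mul (μ := 0) (v := 1) (-1)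
  simp only [neg_one_mul] at this
  unfold G
  rw [this]
  norm_num

lemma gauss_Iic_neg (x : ℝ) : G (Iic (-x)) = G (Ici x) := by
  conv_lhs => rw [← gauss_map_neg]
  rw [Measure.map_apply measurable_neg measurableSet_Iic]
  congr 1
  ext y
  simp

lemma gauss_Iic_zero : G (Iic (0:ℝ)) = 1/2 := by
  have h1 : G (Iic (0:ℝ)) + G (Ici (0:ℝ)) = 1 := by
    rw [← measure_union_add_inter _ measurableSet_Ici, Iic_union_Ici, Iic_inter_Ici,
      Icc_self, gauss_singleton, add_zero, measure_univ]
  have h2 : G (Ici (0:ℝ)) = G (Iic (0:ℝ)) := by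
    rw [← gauss_Iic_neg, neg_zero]
  rw [h2] at h1
  have hfin : G (Iic (0:ℝ)) ≠ ⊤ := measure_ne_top _ _
  refine (ENNReal.toReal_eq_toReal_iff' hfin (by simp [ENNReal.div_eq_top])).mp ?_
  have := congrArg ENNReal.toReal h1
  rw [ENNReal.toReal_add hfin hfin] at this
  simp at this ⊢
  linarith

lemma cdf_G (x : ℝ) : cdf G x = (G (Iic x)).toReal := cdf_eq_real (μ := G) x

lemma cdf_G_zero : cdf G 0 = 1/2 := by
  rw [cdf_G, gauss_Iic_zero]
  simp

lemma cdf_G_strict {a b : ℝ} (h : a < b) : cdf G a < cdf G b := by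
  rw [cdf_G, cdf_G]
  have hsplit : G (Iic b) = G (Iic a) + G (Ioc a b) := by
    rw [← measure_union (Iic_disjoint_Ioc le_rfl) measurableSet_Ioc, Iic_union_Ioc_eq_Iic h.le]
  rw [hsplit, ENNReal.toReal_add (measure_ne_top _ _) (measure_ne_top _ _)]
  have : 0 < (G (Ioc a b)).toReal :=
    ENNReal.toReal_pos (gauss_Ioc_pos h).ne' (measure_ne_top _ _)
  linarith

lemma level_set {q r : ℝ} (hq : cdf G q = r) : {x : ℝ | cdf G x ≤ r} = Iic q := by
  ext x
  simp only [mem_setOf_eq, mem_Iic]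
  constructor
  · intro hx
    by_contra hxq
    exact absurd hx (not_le.mpr (hq ▸ cdf_G_strict (not_le.mp hxq)))
  · intro hx
    rw [← hq]
    rcases eq_or_lt_of_le hx with rfl | h
    · exact le_rfl
    · exact (cdf_G_strict h).le

lemma gaussPDF_le_one (x : ℝ) : gaussianPDF 0 1 x ≤ 1 := by
  rw [gaussianPDF, show (1:ℝ≥0∞) = ENNReal.ofReal 1 by simp]
  apply ENNReal.ofReal_le_ofReal
  rw [gaussianPDFReal]
  have h1 : Real.sqrt (2 * Real.pi * 1) ≥ 1 := by
    rw [show (2 * Real.pi * 1) = 2 * Real.pi by ring]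
    nlinarith [Real.pi_gt_three, Real.sq_sqrt (by positivity : (0:ℝ) ≤ 2 * Real.pi),
      Real.sqrt_nonneg (2 * Real.pi)]
  have h2 : Real.exp (-(x - 0)^2 / (2*1)) ≤ 1 := by
    rw [Real.exp_le_one_iff]
    nlinarith [sq_nonneg (x - 0)]
  exact mul_le_one₀ (inv_le_one_of_one_le₀ h1) (Real.exp_nonneg _) h2

lemma gauss_Ioc_le {a b : ℝ} (h : a ≤ b) : G (Ioc a b) ≤ ENNReal.ofReal (b - a) := by
  have : G (Ioc a b) = ∫⁻ x in Ioc a b, gaussianPDF 0 1 x := by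
    unfold G; rw [gaussianReal_apply 0 one_ne_zero]
  rw [this]
  calc ∫⁻ x in Ioc a b, gaussianPDF 0 1 x ≤ ∫⁻ _ in Ioc a b, 1 :=
        lintegral_mono fun x => gaussPDF_le_one x
    _ = volume (Ioc a b) := by simp
    _ = ENNReal.ofReal (b - a) := Real.volume_Ioc

lemma cdf_G_cont : Continuous (cdf G) := by
  have key : ∀ a b : ℝ, a ≤ b → cdf G b - cdf G a ≤ b - a := by
    intro a b hab
    have hsplit : G (Iic b) = G (Iic a) + G (Ioc a b) := by
      rw [← measure_union (Iic_disjoint_Ioc le_rfl) measurableSet_Ioc, Iic_union_Ioc_eq_Iic hab]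
    rw [cdf_G, cdf_G, hsplit, ENNReal.toReal_add (measure_ne_top _ _) (measure_ne_top _ _)]
    have := ENNReal.toReal_mono (by simp) (gauss_Ioc_le hab)
    rw [ENNReal.toReal_ofReal (by linarith)] at this
    linarith
  have : LipschitzWith 1 (cdf G) := by
    apply LipschitzWith.of_dist_le_mul
    intro x y
    rw [Real.dist_eq, Real.dist_eq, NNReal.coe_one, one_mul]
    rcases le_total x y with h | h
    · have hk := key x y h
      have hm := monotone_cdf (μ := G) h
      have habs : |x - y| = y - x := by rw [abs_sub_comm]; exact abs_of_nonneg (by linarith)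
      rw [abs_sub_le_iff, habs]
      constructor <;> linarith
    · have hk := key y x h
      have hm := monotone_cdf (μ := G) h
      have habs : |x - y| = x - y := abs_of_nonneg (by linarith)
      rw [abs_sub_le_iff, habs]
      constructor <;> linarith
  exact this.continuous

lemma exists_quarter : ∃ q : ℝ, cdf G q = 1/4 ∧ G (Iic q) = 1/4 := by
  obtain ⟨a, ha⟩ : ∃ a, cdf G a < 1/4 :=
    ((tendsto_cdf_atBot G).eventually_lt_const (by norm_num)).exists
  set a' := min a 0 with ha'
  have h1 : cdf G a' ≤ cdf G a := monotone_cdf (μ := G) (min_le_left _ _)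
  have hmem : (1/4 : ℝ) ∈ Icc (cdf G a') (cdf G 0) := by
    rw [cdf_G_zero]
    constructor <;> [linarith; norm_num]
  obtain ⟨q, _, hq⟩ := intermediate_value_Icc (min_le_right a 0) cdf_G_cont.continuousOn hmem
  refine ⟨q, hq, ?_⟩
  refine (ENNReal.toReal_eq_toReal_iff' (measure_ne_top _ _) (by simp [ENNReal.div_eq_top])).mp ?_
  rw [← cdf_G, hq]
  simp

noncomputable def P2 : Measure (ℝ × ℝ) := G.prod G

lemma P2_diag : P2 {p : ℝ × ℝ | p.1 = p.2} = 0 := by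
  unfold P2
  rw [Measure.prod_apply (measurableSet_eq_fun measurable_fst measurable_snd)]
  have : ∀ x : ℝ, (Prod.mk x ⁻¹' {p : ℝ × ℝ | p.1 = p.2}) = {x} := by
    intro x; ext y; simp [eq_comm]
  simp [this, gauss_singleton]

lemma P2_T (q : ℝ) :
    P2 {p : ℝ × ℝ | p.2 ≤ p.1 ∧ p.1 ≤ q} + P2 {p : ℝ × ℝ | p.2 ≤ p.1 ∧ p.1 ≤ q}
      = G (Iic q) * G (Iic q) := by
  set T := {p : ℝ × ℝ | p.2 ≤ p.1 ∧ p.1 ≤ q} with hT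
  set T' := {p : ℝ × ℝ | p.1 ≤ p.2 ∧ p.2 ≤ q} with hT'
  have hTm : MeasurableSet T :=
    (measurableSet_le measurable_snd measurable_fst).inter (measurableSet_le measurable_fst measurable_const)
  have hswap : P2 T' = P2 T := by
    have : T' = Prod.swap ⁻¹' T := by ext p; simp [hT, hT']
    rw [this]
    unfold P2
    rw [← Measure.map_apply measurable_swap hTm, Measure.prod_swap]
  have hunion : T ∪ T' = Iic q ×ˢ Iic q := by
    ext p
    simp only [hT, hT', mem_union, mem_setOf_eq, mem_prod, mem_Iic]
    constructor
    · rintro (⟨h1, h2⟩ | ⟨h1, h2⟩) <;> constructor <;> linarith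
    · rintro ⟨h1, h2⟩
      rcases le_total p.2 p.1 with h | h
      · exact Or.inl ⟨h, h1⟩
      · exact Or.inr ⟨h, h2⟩
  have hinter : P2 (T ∩ T') = 0 := by
    apply measure_mono_null _ P2_diag
    rintro p ⟨⟨h1, _⟩, ⟨h2, _⟩⟩
    exact le_antisymm h2 h1
  nth_rewrite 2 [← hswap]
  calc P2 T + P2 T' = P2 (T ∪ T') + P2 (T ∩ T') := (measure_union_add_inter T
        ((measurableSet_le measurable_fst measurable_snd).inter (measurableSet_le measurable_snd measurable_const))).symm
    _ = G (Iic q) * G (Iic q) := by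
        rw [hinter, add_zero, hunion]
        unfold P2
        rw [Measure.prod_prod]

lemma P2_S_meas (q : ℝ) : MeasurableSet {p : ℝ × ℝ | p.1 ≤ q ∧ p.1 + p.2 ≤ 0} :=
  (measurableSet_le measurable_fst measurable_const).inter
    (measurableSet_le (measurable_fst.add measurable_snd) measurable_const)

lemma P2_main (q : ℝ) :
    P2 {p : ℝ × ℝ | p.1 ≤ q ∧ p.1 + p.2 ≤ 0} + P2 {p : ℝ × ℝ | p.1 ≤ q ∧ p.1 + p.2 ≤ 0}
      + G (Iic q) * G (Iic q) = G (Iic q) + G (Iic q) := by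
  set S := {p : ℝ × ℝ | p.1 ≤ q ∧ p.1 + p.2 ≤ 0} with hS
  set U := {p : ℝ × ℝ | p.1 ≤ q ∧ p.1 ≤ p.2} with hU
  set T := {p : ℝ × ℝ | p.2 ≤ p.1 ∧ p.1 ≤ q} with hT
  have hUm : MeasurableSet U :=
    (measurableSet_le measurable_fst measurable_const).inter (measurableSet_le measurable_fst measurable_snd)
  have hmp : MeasurePreserving (Prod.map (id : ℝ → ℝ) (fun x : ℝ => -x)) P2 P2 :=
    (MeasurePreserving.id G).prod ⟨measurable_neg, gauss_map_neg⟩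
  have hSU : P2 S = P2 U := by
    have hpre : Prod.map (id : ℝ → ℝ) (fun x : ℝ => -x) ⁻¹' S = U := by
      ext p
      simp only [hS, hU, preimage_setOf_eq, Prod.map_apply, id_eq, mem_setOf_eq, Prod.map_fst, Prod.map_snd]
      constructor <;> rintro ⟨h1, h2⟩ <;> exact ⟨h1, by linarith⟩
    rw [← hmp.measure_preimage (P2_S_meas q).nullMeasurableSet, hpre]
  have hunion : U ∪ T = Iic q ×ˢ univ := by
    ext p
    simp only [hU, hT, mem_union, mem_setOf_eq, mem_prod, mem_Iic, mem_univ, and_true]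
    constructor
    · rintro (⟨h1, _⟩ | ⟨_, h2⟩)
      · exact h1
      · exact h2
    · intro h1
      rcases le_total p.1 p.2 with h | h
      · exact Or.inl ⟨h1, h⟩
      · exact Or.inr ⟨h, h1⟩
  have hTm : MeasurableSet T := by
    exact (measurableSet_le measurable_snd measurable_fst).inter (measurableSet_le measurable_fst measurable_const)
  have hinter : P2 (U ∩ T) = 0 := by
    apply measure_mono_null _ P2_diag
    rintro p ⟨⟨_, h1⟩, ⟨h2, _⟩⟩
    exact le_antisymm h1 h2
  have hUT : P2 U + P2 T = G (Iic q) := by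
    rw [← measure_union_add_inter U hTm, hunion, hinter, add_zero]
    unfold P2
    rw [Measure.prod_prod, measure_univ, mul_one]
  have hTT := P2_T q
  rw [hSU]
  calc P2 U + P2 U + G (Iic q) * G (Iic q) = P2 U + P2 U + (P2 T + P2 T) := by rw [hTT]
    _ = (P2 U + P2 T) + (P2 U + P2 T) := by ring
    _ = G (Iic q) + G (Iic q) := by rw [hUT]

lemma hGdef : gaussianReal 0 1 = G := rfl

lemma solve1 {x : ℝ≥0∞} (h : x + x + 1/2 * (1/2) = 1/2 + 1/2) : x = 3/8 := by
  have hx : x ≠ ⊤ := by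
    intro hx; rw [hx] at h
    simp at h
    exact absurd h.symm (by simp [ENNReal.add_eq_top, ENNReal.inv_eq_top])
  have := congrArg ENNReal.toReal h
  rw [ENNReal.toReal_add (by simp [ENNReal.add_eq_top, hx]) (by simp [ENNReal.mul_eq_top, ENNReal.div_eq_top]),
    ENNReal.toReal_add hx hx,
    ENNReal.toReal_add (by simp [ENNReal.div_eq_top]) (by simp [ENNReal.div_eq_top])] at this
  refine (ENNReal.toReal_eq_toReal_iff' hx (by simp [ENNReal.div_eq_top])).mp ?_
  simp at this ⊢
  norm_num at this ⊢
  linarith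

lemma solve2 {x : ℝ≥0∞} (h : x + x + 1/4 * (1/4) = 1/4 + 1/4) : x = 7/32 := by
  have hx : x ≠ ⊤ := by
    intro hx; rw [hx] at h
    simp at h
    exact absurd h.symm (by simp [ENNReal.add_eq_top, ENNReal.inv_eq_top])
  have := congrArg ENNReal.toReal h
  rw [ENNReal.toReal_add (by simp [ENNReal.add_eq_top, hx]) (by simp [ENNReal.mul_eq_top, ENNReal.div_eq_top]),
    ENNReal.toReal_add hx hx,
    ENNReal.toReal_add (by simp [ENNReal.div_eq_top]) (by simp [ENNReal.div_eq_top])] at this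
  refine (ENNReal.toReal_eq_toReal_iff' hx (by simp [ENNReal.div_eq_top])).mp ?_
  simp at this ⊢
  norm_num at this ⊢
  linarith

/-- If `X₁, Y` are i.i.d. standard normal, `X₂ = X₁/√2 + Y/√2`, `p₁ = Φ(X₁)`, `p₂ = Φ(X₂)`,
then `P(p₂ ≤ 1/2 ∣ p₁ ≤ 1/2) = 3/4` and `P(p₂ ≤ 1/2 ∣ p₁ ≤ 1/4) = 7/8`. -/
theorem cond_prob_pvalues
    {Ω : Type} [MeasurableSpace Ω] (μ : Measure Ω) [IsProbabilityMeasure μ]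
    (X₁ Y : Ω → ℝ) (hX₁ : Measurable X₁) (hY : Measurable Y)
    (hlawX : μ.map X₁ = gaussianReal 0 1) (hlawY : μ.map Y = gaussianReal 0 1)
    (hindep : IndepFun X₁ Y μ)
    (X₂ : Ω → ℝ) (hX₂ : ∀ ω, X₂ ω = X₁ ω / Real.sqrt 2 + Y ω / Real.sqrt 2)
    (p₁ p₂ : Ω → ℝ)
    (hp₁ : ∀ ω, p₁ ω = cdf (gaussianReal 0 1) (X₁ ω))
    (hp₂ : ∀ ω, p₂ ω = cdf (gaussianReal 0 1) (X₂ ω)) :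
    μ[{ω | p₂ ω ≤ 1/2} | {ω | p₁ ω ≤ 1/2}] = 3/4 ∧
    μ[{ω | p₂ ω ≤ 1/2} | {ω | p₁ ω ≤ 1/4}] = 7/8 := by
  obtain ⟨q, hq, hGq⟩ := exists_quarter
  have hsqrt : (0:ℝ) < Real.sqrt 2 := by positivity
  have hiff : ∀ (t r qq : ℝ), cdf G qq = r → (cdf G t ≤ r ↔ t ≤ qq) := by
    intro t r qq hqq
    rw [show (cdf G t ≤ r) = (t ∈ {x : ℝ | cdf G x ≤ r}) from rfl, level_set hqq, mem_Iic]
  have hA : {ω | p₂ ω ≤ 1/2} = {ω | X₁ ω + Y ω ≤ 0} := by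
    ext ω
    simp only [mem_setOf_eq, hp₂, hX₂, hGdef]
    rw [hiff _ _ _ cdf_G_zero, ← add_div, div_le_iff₀ hsqrt, zero_mul]
  have hB1 : {ω | p₁ ω ≤ 1/2} = X₁ ⁻¹' (Iic 0) := by
    ext ω
    simp only [mem_setOf_eq, hp₁, hGdef, mem_preimage, mem_Iic]
    exact hiff _ _ _ cdf_G_zero
  have hB2 : {ω | p₁ ω ≤ 1/4} = X₁ ⁻¹' (Iic q) := by
    ext ω
    simp only [mem_setOf_eq, hp₁, hGdef, mem_preimage, mem_Iic]
    exact hiff _ _ _ hq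
  have hmap : μ.map (fun ω => (X₁ ω, Y ω)) = P2 := by
    rw [(indepFun_iff_map_prod_eq_prod_map_map hX₁.aemeasurable hY.aemeasurable).mp hindep,
      hlawX, hlawY]
    rfl
  have hμB : ∀ q' : ℝ, μ (X₁ ⁻¹' Iic q') = G (Iic q') := by
    intro q'
    rw [← hGdef, ← hlawX, Measure.map_apply hX₁ measurableSet_Iic]
  have hjoint : ∀ q' : ℝ, μ (X₁ ⁻¹' Iic q' ∩ {ω | X₁ ω + Y ω ≤ 0})
      = P2 {p : ℝ × ℝ | p.1 ≤ q' ∧ p.1 + p.2 ≤ 0} := by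
    intro q'
    have hpre : X₁ ⁻¹' Iic q' ∩ {ω | X₁ ω + Y ω ≤ 0}
        = (fun ω => (X₁ ω, Y ω)) ⁻¹' {p : ℝ × ℝ | p.1 ≤ q' ∧ p.1 + p.2 ≤ 0} := by
      ext ω; simp
    rw [hpre, ← Measure.map_apply (hX₁.prodMk hY) (P2_S_meas q'), hmap]
  have hjoint1 : P2 {p : ℝ × ℝ | p.1 ≤ (0:ℝ) ∧ p.1 + p.2 ≤ 0} = 3/8 := by
    have := P2_main 0
    rw [gauss_Iic_zero] at this
    exact solve1 this
  have hjoint2 : P2 {p : ℝ × ℝ | p.1 ≤ q ∧ p.1 + p.2 ≤ 0} = 7/32 := by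
    have := P2_main q
    rw [hGq] at this
    exact solve2 this
  constructor
  · rw [hA, hB1, cond_apply (hX₁ measurableSet_Iic), hjoint 0, hμB 0, gauss_Iic_zero, hjoint1]
    refine (ENNReal.toReal_eq_toReal_iff' (by simp [ENNReal.div_eq_top, ENNReal.mul_eq_top, ENNReal.inv_eq_top]) (by simp [ENNReal.div_eq_top])).mp ?_
    simp [ENNReal.toReal_inv]
    norm_num
  · rw [hA, hB2, cond_apply (hX₁ measurableSet_Iic), hjoint q, hμB q, hGq, hjoint2]
    refine (ENNReal.toReal_eq_toReal_iff' (by simp [ENNReal.div_eq_top, ENNReal.mul_eq_top, ENNReal.inv_eq_top]) (by simp [ENNReal.div_eq_top])).mp ?_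
    simp [ENNReal.toReal_inv]
    norm_num
end

section
/- Consider a step-up test with deterministic critical values 0 < α_{1:n} ≤ … ≤ α_{n:n} < 1 on p-values p₁,…,pₙ where the p-values of true null hypotheses are i.i.d. uniform on (0,1) and independent of the false p-values (BI model) with N = n₀ true hypotheses fixed. If α_{j:n} ≥ jc/n for all j ≤ n and some c > 0, then FDR = E(V/R) ≥ c·n₀/n (with V/R := 0 when R = 0). -/
open MeasureTheory ProbabilityTheory Finset
open scoped Classical

/-- Number of rejections `R` of the step-up test with critical values `αc 1 ≤ … ≤ αc n`:
`R = max{i ∈ {1,…,n} : p_{i:n} ≤ αc i} = max{i : #{j : p_j ≤ αc i} ≥ i}` (`0` if empty). -/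
noncomputable def numRej {Ω ι : Type*} [Fintype ι] (n : ℕ) (αc : ℕ → ℝ)
    (q : ι → Ω → ℝ) (ω : Ω) : ℕ :=
  ((Finset.Icc 1 n).filter fun i =>
    i ≤ (Finset.univ.filter fun j => q j ω ≤ αc i).card).sup id

/-- Number `V` of falsely rejected true hypotheses: true `p`-values `≤ αc (max R 1)`
(with the convention `α_{0:n} = α_{1:n}`). -/
noncomputable def numFalseRej {Ω ι : Type*} [Fintype ι] (n : ℕ) (αc : ℕ → ℝ)
    (q : ι → Ω → ℝ) (T : Finset ι) (ω : Ω) : ℕ :=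
  (T.filter fun j => q j ω ≤ αc (max (numRej n αc q ω) 1)).card

section Comb
variable {Ω ι : Type*} [Fintype ι] (n : ℕ) (αc : ℕ → ℝ) (q : ι → Ω → ℝ) (ω : Ω)

lemma numRej_le_n : numRej n αc q ω ≤ n := by
  apply Finset.sup_le
  intro i hi
  exact (Finset.mem_Icc.mp (Finset.mem_filter.mp hi).1).2

lemma numRej_mem (h : numRej n αc q ω ≠ 0) :
    numRej n αc q ω ∈ (Finset.Icc 1 n).filter fun i =>
      i ≤ (Finset.univ.filter fun j => q j ω ≤ αc i).card := by
  set S := (Finset.Icc 1 n).filter fun i =>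
      i ≤ (Finset.univ.filter fun j => q j ω ≤ αc i).card with hS
  have hne : S.Nonempty := by
    by_contra hc
    rw [Finset.not_nonempty_iff_eq_empty] at hc
    simp [numRej, ← hS, hc] at h
  obtain ⟨b, hb, hbe⟩ := Finset.exists_mem_eq_sup S hne id
  have h2 : numRej n αc q ω = b := hbe
  rw [h2]; exact hb

lemma le_numRej {j : ℕ} (hj : j ∈ Finset.Icc 1 n)
    (hc : j ≤ (Finset.univ.filter fun k => q k ω ≤ αc j).card) :
    j ≤ numRej n αc q ω :=
  Finset.le_sup (f := id) (Finset.mem_filter.mpr ⟨hj, hc⟩)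

end Comb

section Key
variable {Ω ι : Type*} [Fintype ι] [DecidableEq ι] (n : ℕ) (αc : ℕ → ℝ) (q : ι → Ω → ℝ)
  (i : ι) (ω : Ω)

/-- modified p-values with `q i` set to `0`. -/
noncomputable def qmod : ι → Ω → ℝ := fun j => if j = i then (fun _ => (0:ℝ)) else q j

lemma alpha_pos (hpos : 0 < αc 1)
    (hmono : ∀ a b, 1 ≤ a → a ≤ b → b ≤ n → αc a ≤ αc b)
    {j : ℕ} (h1 : 1 ≤ j) (h2 : j ≤ n) : 0 < αc j :=
  lt_of_lt_of_le hpos (hmono 1 j le_rfl h1 h2)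

lemma cnt_le {t : ℝ} (ht : 0 ≤ t) :
    (Finset.univ.filter fun j => q j ω ≤ t).card ≤
    (Finset.univ.filter fun j => qmod q i j ω ≤ t).card := by
  apply Finset.card_le_card
  intro j hj
  simp only [Finset.mem_filter, Finset.mem_univ, true_and] at hj ⊢
  unfold qmod
  by_cases hji : j = i
  · simp [hji, ht]
  · simp [hji]; exact hj

lemma cnt_eq {t : ℝ} (ht : 0 ≤ t) (hqi : q i ω ≤ t) :
    (Finset.univ.filter fun j => qmod q i j ω ≤ t).card =
    (Finset.univ.filter fun j => q j ω ≤ t).card := by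
  congr 1
  apply Finset.filter_congr
  intro j _
  unfold qmod
  by_cases hji : j = i
  · simp [hji, ht, hqi]
  · simp [hji]

lemma numRej_le_mod (hpos : 0 < αc 1)
    (hmono : ∀ a b, 1 ≤ a → a ≤ b → b ≤ n → αc a ≤ αc b) :
    numRej n αc q ω ≤ numRej n αc (qmod q i) ω := by
  apply Finset.sup_mono
  intro j hj
  rw [Finset.mem_filter] at hj ⊢
  refine ⟨hj.1, le_trans hj.2 (cnt_le q i ω ?_)⟩
  have := Finset.mem_Icc.mp hj.1
  exact le_of_lt (alpha_pos n αc hpos hmono this.1 this.2)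

lemma one_le_numRej_mod (hn : 0 < n) (hpos : 0 < αc 1) :
    1 ≤ numRej n αc (qmod q i) ω := by
  apply le_numRej
  · exact Finset.mem_Icc.mpr ⟨le_rfl, hn⟩
  · apply Finset.card_pos.mpr
    exact ⟨i, by rw [Finset.mem_filter]; simp [qmod, le_of_lt hpos]⟩

lemma numRej_mod_eq_of_le (hpos : 0 < αc 1)
    (hmono : ∀ a b, 1 ≤ a → a ≤ b → b ≤ n → αc a ≤ αc b)
    (hR : 1 ≤ numRej n αc q ω)
    (hqi : q i ω ≤ αc (numRej n αc q ω)) :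
    numRej n αc (qmod q i) ω = numRej n αc q ω := by
  set R := numRej n αc q ω with hRdef
  refine le_antisymm ?_ (numRej_le_mod n αc q i ω hpos hmono)
  apply Finset.sup_le
  intro j hj
  rw [Finset.mem_filter, Finset.mem_Icc] at hj
  obtain ⟨⟨hj1, hjn⟩, hjc⟩ := hj
  simp only [id]
  by_contra hlt
  push_neg at hlt
  have hRn : R ≤ n := numRej_le_n n αc q ω
  have hRj : R ≤ j := le_of_lt hlt
  have hα : αc R ≤ αc j := hmono R j hR hRj hjn
  have hqij : q i ω ≤ αc j := le_trans hqi hα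
  have hαj : 0 ≤ αc j := le_of_lt (alpha_pos n αc hpos hmono hj1 hjn)
  have hce := cnt_eq q i ω hαj hqij
  rw [hce] at hjc
  have : j ≤ R := le_numRej n αc q ω (Finset.mem_Icc.mpr ⟨hj1, hjn⟩) hjc
  omega

lemma numRej_eq_mod_of_le (hn : 0 < n) (hpos : 0 < αc 1)
    (hmono : ∀ a b, 1 ≤ a → a ≤ b → b ≤ n → αc a ≤ αc b)
    (hqi : q i ω ≤ αc (numRej n αc (qmod q i) ω)) :
    numRej n αc q ω = numRej n αc (qmod q i) ω := by
  set R' := numRej n αc (qmod q i) ω with hR'def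
  have hR'1 : 1 ≤ R' := one_le_numRej_mod n αc q i ω hn hpos
  refine le_antisymm (numRej_le_mod n αc q i ω hpos hmono) ?_
  have hmem := numRej_mem n αc (qmod q i) ω (by omega)
  rw [Finset.mem_filter] at hmem
  obtain ⟨hicc, hcard⟩ := hmem
  have h12 := Finset.mem_Icc.mp hicc
  have hα : 0 ≤ αc R' := le_of_lt (alpha_pos n αc hpos hmono h12.1 h12.2)
  rw [cnt_eq q i ω hα hqi] at hcard
  exact le_numRej n αc q ω hicc hcard

end Key

section PW
variable {Ω ι : Type*} [Fintype ι] [DecidableEq ι] (n : ℕ) (αc : ℕ → ℝ) (q : ι → Ω → ℝ)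
  (i : ι) (ω : Ω)

lemma key_pointwise (hn : 0 < n) (hpos : 0 < αc 1)
    (hmono : ∀ a b, 1 ≤ a → a ≤ b → b ≤ n → αc a ≤ αc b) :
    (if q i ω ≤ αc (max (numRej n αc q ω) 1) then (1:ℝ) else 0) / (numRej n αc q ω : ℝ)
    = ∑ r ∈ Finset.Icc 1 n,
        if (numRej n αc (qmod q i) ω = r ∧ q i ω ≤ αc r) then ((r:ℝ))⁻¹ else 0 := by
  set R := numRej n αc q ω with hR
  set R' := numRej n αc (qmod q i) ω with hR'
  have hR'1 : 1 ≤ R' := one_le_numRej_mod n αc q i ω hn hpos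
  have hR'n : R' ≤ n := numRej_le_n n αc (qmod q i) ω
  have hrhs : (∑ r ∈ Finset.Icc 1 n,
      if (R' = r ∧ q i ω ≤ αc r) then ((r:ℝ))⁻¹ else 0)
      = if q i ω ≤ αc R' then ((R':ℝ))⁻¹ else 0 := by
    rw [Finset.sum_congr rfl (g := fun r => if r = R' then
        (if q i ω ≤ αc R' then ((R':ℝ))⁻¹ else 0) else 0)]
    · rw [Finset.sum_ite_eq' (Finset.Icc 1 n) R']
      simp [Finset.mem_Icc.mpr ⟨hR'1, hR'n⟩]
    · intro r _
      by_cases h : R' = r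
      · subst h; simp
      · simp [h, Ne.symm h]
  rw [hrhs]
  by_cases hqi : q i ω ≤ αc R'
  · have hRR' : R = R' := numRej_eq_mod_of_le n αc q i ω hn hpos hmono hqi
    have hR1 : 1 ≤ R := hRR' ▸ hR'1
    rw [max_eq_left hR1]
    rw [hRR']
    simp [hqi, one_div]
  · simp only [hqi, if_false]
    rcases Nat.eq_zero_or_pos R with h0 | h1
    · rw [h0]; simp
    · rw [max_eq_left h1]
      have : ¬ q i ω ≤ αc R := by
        intro h
        have := numRej_mod_eq_of_le n αc q i ω hpos hmono h1 h
        rw [← hR', ← hR] at this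
        exact hqi (this ▸ h)
      simp [this]

end PW

section Meas
variable {Ω ι : Type*} [Fintype ι]

lemma sup_filter_eq_sup_ite (s : Finset ℕ) (p : ℕ → Prop) [DecidablePred p] :
    (s.filter p).sup id = s.sup fun r => if p r then r else 0 := by
  apply le_antisymm
  · apply Finset.sup_le
    intro j hj
    rw [Finset.mem_filter] at hj
    have : id j = (if p j then j else 0) := by simp [hj.2]
    rw [this]
    exact Finset.le_sup (f := fun r => if p r then r else 0) hj.1
  · apply Finset.sup_le
    intro j hj
    by_cases h : p j
    · simp only [h, if_true]
      exact Finset.le_sup (f := id) (Finset.mem_filter.mpr ⟨hj, h⟩)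
    · simp [h]

lemma measurable_finset_sup {β : Type*} [MeasurableSpace Ω] (s : Finset β) (f : β → Ω → ℕ)
    (hf : ∀ b ∈ s, Measurable (f b)) : Measurable fun ω => s.sup fun b => f b ω := by
  classical
  induction s using Finset.induction with
  | empty => simp only [Finset.sup_empty]; exact measurable_const
  | @insert a s ha ih =>
    simp only [Finset.sup_insert]
    exact (measurable_of_countable (fun p : ℕ × ℕ => p.1 ⊔ p.2)).comp
      ((hf a (Finset.mem_insert_self a s)).prodMk
        (ih fun b hb => hf b (Finset.mem_insert_of_mem hb)))

lemma measurable_cnt [MeasurableSpace Ω] (q : ι → Ω → ℝ) (hq : ∀ j, Measurable (q j)) (t : ℝ) :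
    Measurable fun ω => (Finset.univ.filter fun j => q j ω ≤ t).card := by
  classical
  have : (fun ω => (Finset.univ.filter fun j => q j ω ≤ t).card)
      = fun ω => ∑ j : ι, if q j ω ≤ t then 1 else 0 := by
    funext ω; rw [Finset.card_filter]
  rw [this]
  apply Finset.measurable_sum
  intro j _
  exact Measurable.ite (measurableSet_le (hq j) measurable_const)
    measurable_const measurable_const

lemma measurable_numRej [MeasurableSpace Ω] (n : ℕ) (αc : ℕ → ℝ) (q : ι → Ω → ℝ)
    (hq : ∀ j, Measurable (q j)) : Measurable (numRej n αc q) := by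
  classical
  have : numRej n αc q = fun ω => (Finset.Icc 1 n).sup
      fun r => if r ≤ (Finset.univ.filter fun j => q j ω ≤ αc r).card then r else 0 := by
    funext ω; exact sup_filter_eq_sup_ite _ _
  rw [this]
  apply measurable_finset_sup
  intro r _
  exact (measurable_of_countable (fun k : ℕ => if r ≤ k then r else 0)).comp
    (measurable_cnt q hq (αc r))

end Meas

section Glue
open MeasurableSpace

lemma indep_glue {Ω : Type*} {mΩ : MeasurableSpace Ω} {μ : Measure Ω} [IsProbabilityMeasure μ]
    {mA mB mC : MeasurableSpace Ω} (hA : mA ≤ mΩ) (hB : mB ≤ mΩ) (hC : mC ≤ mΩ)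
    (hAB : Indep mA mB μ) (hABC : Indep (mA ⊔ mB) mC μ) :
    Indep mA (mB ⊔ mC) μ := by
  rw [Indep_iff] at hAB hABC
  refine IndepSets.indep (p1 := {s | MeasurableSet[mA] s})
    (p2 := {s | ∃ B C, MeasurableSet[mB] B ∧ MeasurableSet[mC] C ∧ s = B ∩ C})
    hA (sup_le hB hC) ?_ ?_ ?_ ?_ ?_
  · intro s hs t ht _
    exact MeasurableSet.inter hs ht
  · rintro s ⟨B1, C1, hB1, hC1, rfl⟩ t ⟨B2, C2, hB2, hC2, rfl⟩ _
    exact ⟨B1 ∩ B2, C1 ∩ C2, hB1.inter hB2, hC1.inter hC2, by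
      rw [Set.inter_inter_inter_comm]⟩
  · exact (@MeasurableSpace.generateFrom_measurableSet Ω mA).symm
  · apply le_antisymm
    · apply sup_le
      · intro s hs
        exact measurableSet_generateFrom ⟨s, Set.univ, hs, MeasurableSet.univ,
          (Set.inter_univ s).symm⟩
      · intro s hs
        exact measurableSet_generateFrom ⟨Set.univ, s, MeasurableSet.univ, hs,
          (Set.univ_inter s).symm⟩
    · apply generateFrom_le
      rintro s ⟨B, C, hB', hC', rfl⟩
      exact MeasurableSet.inter ((le_sup_left : mB ≤ mB ⊔ mC) B hB')
        ((le_sup_right : mC ≤ mB ⊔ mC) C hC')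
  · rw [IndepSets_iff]
    rintro A s hA' ⟨B, C, hB', hC', rfl⟩
    have hABsup : MeasurableSet[mA ⊔ mB] (A ∩ B) :=
      MeasurableSet.inter ((le_sup_left : mA ≤ mA ⊔ mB) A hA')
        ((le_sup_right : mB ≤ mA ⊔ mB) B hB')
    have hBsup : MeasurableSet[mA ⊔ mB] B := (le_sup_right : mB ≤ mA ⊔ mB) B hB'
    calc μ (A ∩ (B ∩ C)) = μ ((A ∩ B) ∩ C) := by rw [Set.inter_assoc]
    _ = μ (A ∩ B) * μ C := hABC _ _ hABsup hC'
    _ = μ A * μ B * μ C := by rw [hAB _ _ hA' hB']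
    _ = μ A * (μ B * μ C) := mul_assoc _ _ _
    _ = μ A * μ (B ∩ C) := by rw [hABC _ _ hBsup hC']

end Glue

section IndepDeriv
open MeasurableSpace

lemma indep_mono_left {Ω : Type*} {mΩ : MeasurableSpace Ω} {μ : Measure Ω}
    {m₁ m₁' m₂ : MeasurableSpace Ω} (h : Indep m₁ m₂ μ) (hle : m₁' ≤ m₁) :
    Indep m₁' m₂ μ := by
  rw [Indep_iff] at h ⊢
  exact fun t1 t2 h1 h2 => h t1 t2 (hle _ h1) h2

lemma indep_qi_rest
    {Ω : Type} [mΩ : MeasurableSpace Ω] (μ : Measure Ω) [IsProbabilityMeasure μ]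
    (n : ℕ) (q : Fin n → Ω → ℝ) (hq : ∀ j, Measurable (q j))
    (T : Finset (Fin n))
    (hiid : iIndepFun
      (fun i : {j : Fin n // j ∈ T} => q i) μ)
    (hindep : IndepFun (fun ω (i : {j : Fin n // j ∈ T}) => q i ω)
      (fun ω (j : {j : Fin n // j ∉ T}) => q j ω) μ)
    (i : Fin n) (hi : i ∈ T) :
    Indep (MeasurableSpace.comap (q i) Real.measurableSpace)
      (⨆ j ∈ ({i}ᶜ : Set (Fin n)), MeasurableSpace.comap (q j) Real.measurableSpace) μ := by
  classical
  set x : {j : Fin n // j ∈ T} := ⟨i, hi⟩ with hx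
  set mA : MeasurableSpace Ω := MeasurableSpace.comap (q i) Real.measurableSpace with hmA
  set mB : MeasurableSpace Ω :=
    ⨆ k ∈ ({x}ᶜ : Set {j : Fin n // j ∈ T}), MeasurableSpace.comap (q ↑k) Real.measurableSpace with hmB
  set mC : MeasurableSpace Ω :=
    ⨆ k : {j : Fin n // j ∉ T}, MeasurableSpace.comap (q ↑k) Real.measurableSpace with hmC
  set mT : MeasurableSpace Ω :=
    ⨆ k : {j : Fin n // j ∈ T}, MeasurableSpace.comap (q ↑k) Real.measurableSpace with hmT
  have h_le : ∀ k : {j : Fin n // j ∈ T},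
      MeasurableSpace.comap (q ↑k) Real.measurableSpace ≤ mΩ :=
    fun k => (hq ↑k).comap_le
  -- within-T independence
  have hAB : Indep mA mB μ := by
    have := indep_iSup_of_disjoint (m := fun k : {j : Fin n // j ∈ T} =>
        MeasurableSpace.comap (q ↑k) Real.measurableSpace) h_le hiid.iIndep
        (S := {x}) (T := {x}ᶜ) disjoint_compl_right
    have hsingle : (⨆ k ∈ ({x} : Set {j : Fin n // j ∈ T}),
        MeasurableSpace.comap (q ↑k) Real.measurableSpace) = mA := by
      simp [hmA, hx]
    rwa [hsingle] at this
  -- block independence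
  have hcomapT : MeasurableSpace.comap (fun ω (k : {j : Fin n // j ∈ T}) => q ↑k ω)
      MeasurableSpace.pi = mT := by
    have : (MeasurableSpace.pi : MeasurableSpace ({j : Fin n // j ∈ T} → ℝ))
        = ⨆ k, MeasurableSpace.comap (fun b => b k) Real.measurableSpace := rfl
    rw [this, MeasurableSpace.comap_iSup]
    exact iSup_congr fun k => MeasurableSpace.comap_comp
  have hcomapTc : MeasurableSpace.comap (fun ω (k : {j : Fin n // j ∉ T}) => q ↑k ω)
      MeasurableSpace.pi = mC := by
    have : (MeasurableSpace.pi : MeasurableSpace ({j : Fin n // j ∉ T} → ℝ))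
        = ⨆ k, MeasurableSpace.comap (fun b => b k) Real.measurableSpace := rfl
    rw [this, MeasurableSpace.comap_iSup]
    exact iSup_congr fun k => MeasurableSpace.comap_comp
  have hTC : Indep mT mC μ := by
    have := (IndepFun_iff_Indep _ _ μ).mp hindep
    rwa [hcomapT, hcomapTc] at this
  have hABC : Indep (mA ⊔ mB) mC μ := by
    refine indep_mono_left hTC (sup_le ?_ ?_)
    · exact le_iSup (fun k : {j : Fin n // j ∈ T} =>
        MeasurableSpace.comap (q ↑k) Real.measurableSpace) x
    · exact iSup₂_le fun k _ => le_iSup (fun k : {j : Fin n // j ∈ T} =>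
        MeasurableSpace.comap (q ↑k) Real.measurableSpace) k
  have hmain : Indep mA (mB ⊔ mC) μ :=
    indep_glue ((hq i).comap_le)
      (iSup₂_le fun k _ => h_le k)
      (iSup_le fun k => (hq ↑k).comap_le) hAB hABC
  have heq : mB ⊔ mC = ⨆ j ∈ ({i}ᶜ : Set (Fin n)),
      MeasurableSpace.comap (q j) Real.measurableSpace := by
    apply le_antisymm
    · apply sup_le
      · refine iSup₂_le fun k hk => ?_
        have hki : (↑k : Fin n) ≠ i := fun h => hk (by
          simp only [Set.mem_singleton_iff]
          exact Subtype.ext h)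
        exact le_iSup₂ (f := fun j (_ : j ∈ ({i}ᶜ : Set (Fin n))) =>
          MeasurableSpace.comap (q j) Real.measurableSpace) (↑k : Fin n) hki
      · refine iSup_le fun k => ?_
        have hki : (↑k : Fin n) ≠ i := fun h => k.prop (h ▸ hi)
        exact le_iSup₂ (f := fun j (_ : j ∈ ({i}ᶜ : Set (Fin n))) =>
          MeasurableSpace.comap (q j) Real.measurableSpace) (↑k : Fin n) hki
    · refine iSup₂_le fun j hj => ?_
      have hji : j ≠ i := hj
      by_cases hjT : j ∈ T
      · refine le_trans ?_ le_sup_left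
        have hmem : (⟨j, hjT⟩ : {j : Fin n // j ∈ T}) ∈ ({x}ᶜ : Set {j : Fin n // j ∈ T}) :=
          fun h => hji (congrArg Subtype.val h)
        exact le_iSup₂ (f := fun k (_ : k ∈ ({x}ᶜ : Set {j : Fin n // j ∈ T})) =>
          MeasurableSpace.comap (q ↑k) Real.measurableSpace) (⟨j, hjT⟩ : {j : Fin n // j ∈ T}) hmem
      · refine le_trans ?_ le_sup_right
        exact le_iSup (fun k : {j : Fin n // j ∉ T} =>
          MeasurableSpace.comap (q ↑k) Real.measurableSpace) ⟨j, hjT⟩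
  rwa [heq] at hmain

end IndepDeriv

/-- Lower FDR bound in the BI model: if `α_{j:n} ≥ jc/n` for all `j ≤ n` with `c > 0`,
then the step-up test has `FDR = E(V/R) ≥ c·n₀/n`. -/
theorem fdr_lower_bound
    {Ω : Type} [MeasurableSpace Ω] (μ : Measure Ω) [IsProbabilityMeasure μ]
    (n n₀ : ℕ) (hn : 0 < n) (hn₀ : n₀ ≤ n)
    (q : Fin n → Ω → ℝ) (hq : ∀ j, Measurable (q j))
    (T : Finset (Fin n)) (hT : T.card = n₀)
    (αc : ℕ → ℝ) (hpos : 0 < αc 1) (hlt : αc n < 1)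
    (hmono : ∀ i j, 1 ≤ i → i ≤ j → j ≤ n → αc i ≤ αc j)
    (hunif : ∀ i ∈ T, μ.map (q i) = volume.restrict (Set.Ioo 0 1))
    (hiid : iIndepFun
      (fun i : {j : Fin n // j ∈ T} => q i) μ)
    (hindep : IndepFun (fun ω (i : {j : Fin n // j ∈ T}) => q i ω)
      (fun ω (j : {j : Fin n // j ∉ T}) => q j ω) μ)
    (c : ℝ) (hc : 0 < c)
    (hαc : ∀ j, 1 ≤ j → j ≤ n → (j : ℝ) * c / n ≤ αc j) :
    c * n₀ / n ≤ ∫ ω, (numFalseRej n αc q T ω : ℝ) / (numRej n αc q ω : ℝ) ∂μ := by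
  classical
  -- the events
  set E : Fin n → ℕ → Set Ω := fun i r =>
    {ω | numRej n αc (qmod q i) ω = r ∧ q i ω ≤ αc r} with hE
  set B : Fin n → ℕ → Set Ω := fun i r => {ω | numRej n αc (qmod q i) ω = r} with hB
  have hmodmeas : ∀ i j, Measurable (qmod q i j) := by
    intro i j
    unfold qmod
    by_cases h : j = i
    · simp only [h, if_pos rfl]; exact measurable_const
    · simp only [if_neg h]; exact hq j
  have hRmeas : ∀ i : Fin n, Measurable (numRej n αc (qmod q i)) :=
    fun i => measurable_numRej n αc (qmod q i) (hmodmeas i)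
  have hBmeas : ∀ i r, MeasurableSet (B i r) :=
    fun i r => hRmeas i (measurableSet_singleton r)
  have hEmeas : ∀ i r, MeasurableSet (E i r) := by
    intro i r
    have : E i r = B i r ∩ (q i) ⁻¹' (Set.Iic (αc r)) := by
      ext ω; simp [hE, hB, Set.mem_setOf_eq]
    rw [this]
    exact (hBmeas i r).inter (hq i measurableSet_Iic)
  -- pointwise identity
  have hpt : ∀ ω, (numFalseRej n αc q T ω : ℝ) / (numRej n αc q ω : ℝ)
      = ∑ i ∈ T, ∑ r ∈ Finset.Icc 1 n, (E i r).indicator (fun _ => ((r:ℝ))⁻¹) ω := by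
    intro ω
    have h1 : (numFalseRej n αc q T ω : ℝ)
        = ∑ i ∈ T, (if q i ω ≤ αc (max (numRej n αc q ω) 1) then (1:ℝ) else 0) := by
      unfold numFalseRej
      rw [Finset.card_filter, Nat.cast_sum]
      exact Finset.sum_congr rfl fun i _ => by split <;> simp
    rw [h1, Finset.sum_div]
    refine Finset.sum_congr rfl fun i _ => ?_
    rw [key_pointwise n αc q i ω hn hpos hmono]
    refine Finset.sum_congr rfl fun r _ => ?_
    simp [Set.indicator_apply, hE, Set.mem_setOf_eq]
  -- integral computation
  have hint : ∫ ω, (numFalseRej n αc q T ω : ℝ) / (numRej n αc q ω : ℝ) ∂μ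
      = ∑ i ∈ T, ∑ r ∈ Finset.Icc 1 n, (μ (E i r)).toReal * ((r:ℝ))⁻¹ := by
    rw [integral_congr_ae (Filter.Eventually.of_forall hpt)]
    rw [integral_finset_sum _ (fun i _ => integrable_finset_sum _
      (fun r _ => (integrable_const _).indicator (hEmeas i r)))]
    refine Finset.sum_congr rfl fun i _ => ?_
    rw [integral_finset_sum _ (fun r _ => (integrable_const _).indicator (hEmeas i r))]
    exact Finset.sum_congr rfl fun r _ => by
      rw [integral_indicator_const _ (hEmeas i r), smul_eq_mul, Measure.real]
  rw [hint]
  -- independence: measure of E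
  have hmeasE : ∀ i ∈ T, ∀ r ∈ Finset.Icc 1 n,
      μ (E i r) = ENNReal.ofReal (αc r) * μ (B i r) := by
    intro i hi r hr
    obtain ⟨hr1, hrn⟩ := Finset.mem_Icc.mp hr
    have hInd := indep_qi_rest μ n q hq T hiid hindep i hi
    rw [Indep_iff] at hInd
    have hAm : MeasurableSet[MeasurableSpace.comap (q i) Real.measurableSpace]
        ((q i) ⁻¹' (Set.Iic (αc r))) := ⟨Set.Iic (αc r), measurableSet_Iic, rfl⟩
    have hq'm : ∀ j, Measurable[⨆ j ∈ ({i}ᶜ : Set (Fin n)),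
        MeasurableSpace.comap (q j) Real.measurableSpace] (qmod q i j) := by
      intro j
      unfold qmod
      by_cases h : j = i
      · simp only [h, if_pos rfl]; exact measurable_const
      · simp only [if_neg h]
        rw [measurable_iff_comap_le]
        exact le_iSup₂ (f := fun j (_ : j ∈ ({i}ᶜ : Set (Fin n))) =>
          MeasurableSpace.comap (q j) Real.measurableSpace) j h
    have hBm : MeasurableSet[⨆ j ∈ ({i}ᶜ : Set (Fin n)),
        MeasurableSpace.comap (q j) Real.measurableSpace] (B i r) :=
      @measurable_numRej Ω (Fin n) _ (⨆ j ∈ ({i}ᶜ : Set (Fin n)),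
        MeasurableSpace.comap (q j) Real.measurableSpace) n αc (qmod q i) hq'm _
        (measurableSet_singleton r)
    have hprod := hInd _ _ hAm hBm
    have hEeq : E i r = (q i) ⁻¹' (Set.Iic (αc r)) ∩ B i r := by
      ext ω; simp [hE, hB, Set.mem_setOf_eq, and_comm]
    have hαr : μ ((q i) ⁻¹' (Set.Iic (αc r))) = ENNReal.ofReal (αc r) := by
      rw [← Measure.map_apply (hq i) measurableSet_Iic, hunif i hi,
        Measure.restrict_apply measurableSet_Iic]
      have hrpos : 0 < αc r := lt_of_lt_of_le hpos (hmono 1 r le_rfl hr1 hrn)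
      have hrlt : αc r < 1 := lt_of_le_of_lt (hmono r n hr1 hrn le_rfl) hlt
      have : Set.Iic (αc r) ∩ Set.Ioo 0 1 = Set.Ioc 0 (αc r) := by
        ext x
        simp only [Set.mem_inter_iff, Set.mem_Iic, Set.mem_Ioo, Set.mem_Ioc]
        constructor
        · rintro ⟨h1, h2, _⟩; exact ⟨h2, h1⟩
        · rintro ⟨h1, h2⟩; exact ⟨h2, h1, lt_of_le_of_lt h2 hrlt⟩
      rw [this, Real.volume_Ioc, sub_zero]
    rw [hEeq, hprod, hαr]
  -- partition sums to 1
  have hpart : ∀ i : Fin n, ∑ r ∈ Finset.Icc 1 n, (μ (B i r)).toReal = 1 := by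
    intro i
    have hdisj : (↑(Finset.Icc 1 n) : Set ℕ).PairwiseDisjoint (B i) := by
      intro r _ s _ hrs
      apply Set.disjoint_left.mpr
      intro ω hωr hωs
      exact hrs (hωr.symm.trans hωs)
    have hunion : (⋃ r ∈ Finset.Icc 1 n, B i r) = Set.univ := by
      ext ω
      simp only [Set.mem_iUnion, Set.mem_univ, iff_true]
      refine ⟨numRej n αc (qmod q i) ω, ?_, rfl⟩
      exact Finset.mem_Icc.mpr ⟨one_le_numRej_mod n αc q i ω hn hpos,
        numRej_le_n n αc (qmod q i) ω⟩
    have hsum : ∑ r ∈ Finset.Icc 1 n, μ (B i r) = 1 := by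
      rw [← measure_biUnion_finset hdisj (fun r _ => hBmeas i r), hunion, measure_univ]
    calc ∑ r ∈ Finset.Icc 1 n, (μ (B i r)).toReal
        = (∑ r ∈ Finset.Icc 1 n, μ (B i r)).toReal :=
          (ENNReal.toReal_sum fun r _ => measure_ne_top μ _).symm
    _ = 1 := by rw [hsum]; simp
  -- lower bound each inner sum by c/n
  have hinner : ∀ i ∈ T, c / n ≤ ∑ r ∈ Finset.Icc 1 n, (μ (E i r)).toReal * ((r:ℝ))⁻¹ := by
    intro i hi
    have hbound : ∀ r ∈ Finset.Icc 1 n,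
        (c / n) * (μ (B i r)).toReal ≤ (μ (E i r)).toReal * ((r:ℝ))⁻¹ := by
      intro r hr
      obtain ⟨hr1, hrn⟩ := Finset.mem_Icc.mp hr
      have hrpos : (0:ℝ) < r := by exact_mod_cast hr1
      rw [hmeasE i hi r hr, ENNReal.toReal_mul, ENNReal.toReal_ofReal
        (le_of_lt (lt_of_lt_of_le hpos (hmono 1 r le_rfl hr1 hrn)))]
      have hkey : c / n ≤ αc r * ((r:ℝ))⁻¹ := by
        rw [← div_eq_mul_inv, le_div_iff₀ hrpos]
        calc c / n * r = (r:ℝ) * c / n := by ring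
        _ ≤ αc r := hαc r hr1 hrn
      calc (c / n) * (μ (B i r)).toReal ≤ (αc r * ((r:ℝ))⁻¹) * (μ (B i r)).toReal :=
            mul_le_mul_of_nonneg_right hkey ENNReal.toReal_nonneg
      _ = αc r * (μ (B i r)).toReal * ((r:ℝ))⁻¹ := by ring
    calc c / n = (c / n) * ∑ r ∈ Finset.Icc 1 n, (μ (B i r)).toReal := by
          rw [hpart i, mul_one]
    _ = ∑ r ∈ Finset.Icc 1 n, (c / n) * (μ (B i r)).toReal := Finset.mul_sum _ _ _
    _ ≤ _ := Finset.sum_le_sum hbound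
  calc c * n₀ / n = ∑ _i ∈ T, c / n := by
        rw [Finset.sum_const, hT, nsmul_eq_mul]; ring
  _ ≤ _ := Finset.sum_le_sum hinner
end

section
/- Let the true p-values be i.i.d. uniform on (0,1), independent of the false p-values (BI model with N = n₀ true hypotheses), and consider the step-up test with deterministic critical values 0 < α_{1:n} ≤ … ≤ α_{n:n} < 1. If α_{j:n} ≤ jc/n for all j ≤ k and some 0 < c < 1, then FDR ≤ c·n₀/n + P(R > k). -/
open MeasureTheory ProbabilityTheory Finset
open scoped Classical

namespace FdrAux

variable {Ω : Type*} {n : ℕ} {αc : ℕ → ℝ}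

noncomputable def cnt (n : ℕ) (αc : ℕ → ℝ) (q : Fin n → Ω → ℝ) (i : ℕ) (ω : Ω) : ℕ :=
  (Finset.univ.filter fun j => q j ω ≤ αc i).card

lemma numRej_def (q : Fin n → Ω → ℝ) (ω : Ω) :
    numRej n αc q ω = ((Finset.Icc 1 n).filter fun i => i ≤ cnt n αc q i ω).sup id := rfl

lemma le_numRej {q : Fin n → Ω → ℝ} {i : ℕ} {ω : Ω} (h1 : 1 ≤ i) (h2 : i ≤ n)
    (h : i ≤ cnt n αc q i ω) : i ≤ numRej n αc q ω :=
  Finset.le_sup (f := id) (mem_filter.mpr ⟨mem_Icc.mpr ⟨h1, h2⟩, h⟩)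

lemma numRej_le_n (q : Fin n → Ω → ℝ) (ω : Ω) : numRej n αc q ω ≤ n :=
  Finset.sup_le fun i hi => (mem_Icc.mp (mem_filter.mp hi).1).2

lemma numRej_spec {q : Fin n → Ω → ℝ} {ω : Ω} (h : 1 ≤ numRej n αc q ω) :
    numRej n αc q ω ≤ cnt n αc q (numRej n αc q ω) ω := by
  classical
  set s := (Finset.Icc 1 n).filter (fun i => i ≤ cnt n αc q i ω) with hs
  have hne : s.Nonempty := by
    rcases Finset.eq_empty_or_nonempty s with he | hne
    · rw [numRej_def, ← hs, he] at h; simp at h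
    · exact hne
  obtain ⟨b, hb, hbe⟩ := Finset.exists_mem_eq_sup s hne id
  have : numRej n αc q ω = b := by rw [numRej_def, ← hs, hbe]; rfl
  rw [this]
  exact (mem_filter.mp hb).2

lemma cnt_mono (hmono : ∀ i j, 1 ≤ i → i ≤ j → j ≤ n → αc i ≤ αc j)
    {q : Fin n → Ω → ℝ} {i j : ℕ} (h1 : 1 ≤ i) (hij : i ≤ j) (hj : j ≤ n) (ω : Ω) :
    cnt n αc q i ω ≤ cnt n αc q j ω := by
  apply Finset.card_le_card
  intro x hx
  rw [mem_filter] at hx ⊢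
  exact ⟨hx.1, hx.2.trans (hmono i j h1 hij hj)⟩

lemma cnt_le_n (q : Fin n → Ω → ℝ) (i : ℕ) (ω : Ω) : cnt n αc q i ω ≤ n := by
  simpa [cnt] using (Finset.card_filter_le Finset.univ fun j => q j ω ≤ αc i)

lemma cnt_numRej (hmono : ∀ i j, 1 ≤ i → i ≤ j → j ≤ n → αc i ≤ αc j)
    {q : Fin n → Ω → ℝ} {ω : Ω} (h : 1 ≤ numRej n αc q ω) :
    cnt n αc q (numRej n αc q ω) ω = numRej n αc q ω := by
  have h1 : numRej n αc q ω ≤ cnt n αc q (numRej n αc q ω) ω := numRej_spec h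
  refine le_antisymm ?_ h1
  by_contra hlt
  push_neg at hlt
  have hm_n : cnt n αc q (numRej n αc q ω) ω ≤ n := cnt_le_n q _ ω
  have h2 : cnt n αc q (numRej n αc q ω) ω ≤ cnt n αc q (cnt n αc q (numRej n αc q ω) ω) ω :=
    cnt_mono hmono h hlt.le hm_n ω
  have := le_numRej (h.trans hlt.le) hm_n h2
  omega


section LOO

variable {q : Fin n → Ω → ℝ} {i : Fin n}

lemma cnt_update_le (hpos : 0 < αc 1) (hmono : ∀ i j, 1 ≤ i → i ≤ j → j ≤ n → αc i ≤ αc j)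
    {s : ℕ} {ω : Ω} (hs1 : 1 ≤ s) (hsn : s ≤ n) :
    cnt n αc q s ω ≤ cnt n αc (Function.update q i 0) s ω := by
  apply Finset.card_le_card
  intro j hj
  rw [mem_filter] at hj ⊢
  refine ⟨hj.1, ?_⟩
  by_cases hji : j = i
  · subst hji
    rw [Function.update_self]
    exact le_of_lt (lt_of_lt_of_le hpos (hmono 1 s le_rfl hs1 hsn))
  · rw [Function.update_of_ne hji]
    exact hj.2

lemma cnt_update_eq (hpos : 0 < αc 1) (hmono : ∀ i j, 1 ≤ i → i ≤ j → j ≤ n → αc i ≤ αc j)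
    {s : ℕ} {ω : Ω} (hs1 : 1 ≤ s) (hsn : s ≤ n) (h : q i ω ≤ αc s) :
    cnt n αc (Function.update q i 0) s ω = cnt n αc q s ω := by
  unfold cnt
  congr 1
  ext j
  simp only [mem_filter, mem_univ, true_and]
  by_cases hji : j = i
  · subst hji
    rw [Function.update_self]
    have h0 : (0:ℝ) ≤ αc s := le_of_lt (lt_of_lt_of_le hpos (hmono 1 s le_rfl hs1 hsn))
    simp [h0, h]
  · rw [Function.update_of_ne hji]

lemma numRej_le_update (hpos : 0 < αc 1) (hmono : ∀ i j, 1 ≤ i → i ≤ j → j ≤ n → αc i ≤ αc j)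
    {ω : Ω} : numRej n αc q ω ≤ numRej n αc (Function.update q i 0) ω := by
  rw [numRej_def, numRej_def]
  apply Finset.sup_mono
  intro s hs
  rw [mem_filter] at hs ⊢
  obtain ⟨hsI, hsc⟩ := hs
  obtain ⟨hs1, hsn⟩ := mem_Icc.mp hsI
  exact ⟨hsI, hsc.trans (cnt_update_le hpos hmono hs1 hsn)⟩

lemma one_le_numRej_update (hn : 0 < n) (hpos : 0 < αc 1) {ω : Ω} :
    1 ≤ numRej n αc (Function.update q i 0) ω := by
  apply le_numRej le_rfl hn
  apply Finset.card_pos.mpr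
  refine ⟨i, mem_filter.mpr ⟨mem_univ _, ?_⟩⟩
  rw [Function.update_self]
  exact le_of_lt hpos

lemma key_forward (hn : 0 < n) (hpos : 0 < αc 1)
    (hmono : ∀ i j, 1 ≤ i → i ≤ j → j ≤ n → αc i ≤ αc j) {ω : Ω}
    (h : q i ω ≤ αc (max (numRej n αc q ω) 1)) :
    1 ≤ numRej n αc q ω ∧ numRej n αc (Function.update q i 0) ω = numRej n αc q ω := by
  have hR1 : 1 ≤ numRej n αc q ω := by
    by_contra h0
    have hR0 : numRej n αc q ω = 0 := by omega
    rw [hR0] at h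
    norm_num at h
    have hc : 1 ≤ cnt n αc q 1 ω :=
      Finset.card_pos.mpr ⟨i, mem_filter.mpr ⟨mem_univ _, h⟩⟩
    have := le_numRej le_rfl hn hc
    omega
  rw [max_eq_left hR1] at h
  refine ⟨hR1, le_antisymm ?_ (numRej_le_update hpos hmono)⟩
  rw [numRej_def (Function.update q i 0)]
  apply Finset.sup_le
  intro s hs
  rw [mem_filter, mem_Icc] at hs
  obtain ⟨⟨hs1, hsn⟩, hscnt⟩ := hs
  show s ≤ numRej n αc q ω
  by_cases hsR : s ≤ numRej n αc q ω
  · exact hsR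
  · push_neg at hsR
    have hqs : q i ω ≤ αc s := h.trans (hmono _ _ hR1 hsR.le hsn)
    rw [cnt_update_eq hpos hmono hs1 hsn hqs] at hscnt
    exact le_numRej hs1 hsn hscnt

lemma key_backward (hn : 0 < n) (hpos : 0 < αc 1)
    (hmono : ∀ i j, 1 ≤ i → i ≤ j → j ≤ n → αc i ≤ αc j) {ω : Ω}
    (h : q i ω ≤ αc (numRej n αc (Function.update q i 0) ω)) :
    numRej n αc (Function.update q i 0) ω = numRej n αc q ω := by
  have h1 : 1 ≤ numRej n αc (Function.update q i 0) ω := one_le_numRej_update hn hpos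
  have hn' : numRej n αc (Function.update q i 0) ω ≤ n := numRej_le_n _ _
  have hspec := numRej_spec h1
  rw [cnt_update_eq hpos hmono h1 hn' h] at hspec
  exact le_antisymm (le_numRej h1 hn' hspec) (numRej_le_update hpos hmono)

lemma key_iff (hn : 0 < n) (hpos : 0 < αc 1)
    (hmono : ∀ i j, 1 ≤ i → i ≤ j → j ≤ n → αc i ≤ αc j) {ω : Ω} :
    q i ω ≤ αc (max (numRej n αc q ω) 1) ↔
      q i ω ≤ αc (numRej n αc (Function.update q i 0) ω) := by
  constructor
  · intro h
    obtain ⟨h1, he⟩ := key_forward hn hpos hmono h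
    rw [he]
    rwa [max_eq_left h1] at h
  · intro h
    have he := key_backward hn hpos hmono h
    rw [he] at h
    have h1 : 1 ≤ numRej n αc q ω := he ▸ one_le_numRej_update hn hpos
    rwa [max_eq_left h1]

lemma key_cond (hn : 0 < n) (hpos : 0 < αc 1)
    (hmono : ∀ i j, 1 ≤ i → i ≤ j → j ≤ n → αc i ≤ αc j) (k : ℕ) {ω : Ω} :
    (if (q i ω ≤ αc (numRej n αc (Function.update q i 0) ω) ∧
          numRej n αc (Function.update q i 0) ω ≤ k)
      then ((numRej n αc (Function.update q i 0) ω : ℝ))⁻¹ else 0)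
    = if (q i ω ≤ αc (max (numRej n αc q ω) 1) ∧ numRej n αc q ω ≤ k)
      then ((numRej n αc q ω : ℝ))⁻¹ else 0 := by
  by_cases h : q i ω ≤ αc (max (numRej n αc q ω) 1)
  · obtain ⟨h1, he⟩ := key_forward hn hpos hmono h
    rw [he, max_eq_left h1]
  · have h2 : ¬ q i ω ≤ αc (numRej n αc (Function.update q i 0) ω) :=
      fun hc => h ((key_iff hn hpos hmono).mpr hc)
    rw [if_neg (fun hc => h2 hc.1), if_neg (fun hc => h hc.1)]

end LOO

end FdrAux

namespace FdrAux
variable {Ω : Type*} {n : ℕ} {αc : ℕ → ℝ}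

lemma measurable_cnt {m : MeasurableSpace Ω} {q : Fin n → Ω → ℝ}
    (hq : ∀ j, Measurable[m] (q j)) (i : ℕ) :
    Measurable[m] (fun ω => cnt n αc q i ω) := by
  simp only [cnt, Finset.card_filter]
  exact Finset.measurable_sum _ fun j _ =>
    Measurable.ite (hq j measurableSet_Iic) measurable_const measurable_const

lemma measurable_sup_filter {m : MeasurableSpace Ω} (s : Finset ℕ) (p : ℕ → Ω → Prop)
    [inst : ∀ i ω, Decidable (p i ω)]
    (hp : ∀ i, MeasurableSet[m] {ω | p i ω}) :
    Measurable[m] fun ω => (s.filter fun i => p i ω).sup id := by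
  classical
  induction s using Finset.induction_on with
  | empty => simpa using measurable_const
  | @insert a s ha ih =>
    have heq : (fun ω => ((insert a s).filter fun i => p i ω).sup id)
        = fun ω => if p a ω then a ⊔ ((s.filter fun i => p i ω).sup id)
            else (s.filter fun i => p i ω).sup id := by
      funext ω
      by_cases h : p a ω <;> simp [Finset.filter_insert, h]
    rw [heq]
    exact Measurable.ite (hp a)
      ((measurable_from_top (f := fun x : ℕ => a ⊔ x)).comp ih) ih

lemma measurable_numRej {m : MeasurableSpace Ω} {q : Fin n → Ω → ℝ}
    (hq : ∀ j, Measurable[m] (q j)) : Measurable[m] (numRej n αc q) := by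
  have : numRej n αc q = fun ω => ((Finset.Icc 1 n).filter fun i => i ≤ cnt n αc q i ω).sup id :=
    rfl
  rw [this]
  apply measurable_sup_filter
  intro i
  have := (measurable_cnt (αc := αc) hq i) (MeasurableSet.of_discrete (s := {x : ℕ | i ≤ x}))
  simpa using this

lemma indep_mono {m0 : MeasurableSpace Ω} {μ : Measure Ω}
    {m1 m2 m1' m2' : MeasurableSpace Ω} (h : Indep m1' m2' μ)
    (h1 : m1 ≤ m1') (h2 : m2 ≤ m2') : Indep m1 m2 μ := by
  rw [Indep_iff] at h ⊢
  intro t1 t2 ht1 ht2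
  exact h _ _ (h1 _ ht1) (h2 _ ht2)

lemma indep_grouping {m0 : MeasurableSpace Ω} {μ : Measure Ω} [IsProbabilityMeasure μ]
    {m1 m2 m3 : MeasurableSpace Ω} (h1 : m1 ≤ m0) (h2 : m2 ≤ m0) (h3 : m3 ≤ m0)
    (h12 : Indep m1 m2 μ) (h123 : Indep (m1 ⊔ m2) m3 μ) : Indep m1 (m2 ⊔ m3) μ := by
  rw [Indep_iff] at h12 h123
  set p2 : Set (Set Ω) :=
    {s | ∃ t u, MeasurableSet[m2] t ∧ MeasurableSet[m3] u ∧ s = t ∩ u} with hp2def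
  have hgen2 : m2 ⊔ m3 = MeasurableSpace.generateFrom p2 := by
    refine le_antisymm (sup_le ?_ ?_) (MeasurableSpace.generateFrom_le ?_)
    · intro s hs
      exact MeasurableSpace.measurableSet_generateFrom
        ⟨s, Set.univ, hs, MeasurableSet.univ, (Set.inter_univ s).symm⟩
    · intro s hs
      exact MeasurableSpace.measurableSet_generateFrom
        ⟨Set.univ, s, MeasurableSet.univ, hs, (Set.univ_inter s).symm⟩
    · rintro s ⟨t, u, ht, hu, rfl⟩
      exact ((le_sup_left : m2 ≤ m2 ⊔ m3) t ht).inter ((le_sup_right : m3 ≤ m2 ⊔ m3) u hu)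
  refine IndepSets.indep h1 (sup_le h2 h3) ?_ ?_
    (@MeasurableSpace.generateFrom_measurableSet Ω m1).symm hgen2 ?_
  · exact fun s hs t ht _ => MeasurableSet.inter hs ht
  · rintro s ⟨t, u, ht, hu, rfl⟩ s' ⟨t', u', ht', hu', rfl⟩ _
    exact ⟨t ∩ t', u ∩ u', ht.inter ht', hu.inter hu', by ext x; simp; tauto⟩
  · rw [IndepSets_iff]
    rintro s s' hs ⟨t, u, ht, hu, rfl⟩
    have hst : MeasurableSet[m1 ⊔ m2] (s ∩ t) :=
      ((le_sup_left : m1 ≤ m1 ⊔ m2) s hs).inter ((le_sup_right : m2 ≤ m1 ⊔ m2) t ht)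
    calc μ (s ∩ (t ∩ u)) = μ ((s ∩ t) ∩ u) := by rw [Set.inter_assoc]
      _ = μ (s ∩ t) * μ u := h123 _ _ hst hu
      _ = μ s * μ t * μ u := by rw [h12 _ _ hs ht]
      _ = μ s * μ (t ∩ u) := by
          rw [h123 t u ((le_sup_right : m2 ≤ m1 ⊔ m2) t ht) hu]; ring


lemma measurable_pi_lambda' {α δ : Type*} {π : δ → Type*} {m : MeasurableSpace α}
    [mπ : ∀ a, MeasurableSpace (π a)] (f : α → ∀ a, π a)
    (hf : ∀ a, Measurable[m] fun c => f c a) : Measurable[m] f := by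
  rw [measurable_iff_comap_le]
  show MeasurableSpace.comap f MeasurableSpace.pi ≤ m
  rw [MeasurableSpace.pi, MeasurableSpace.comap_iSup]
  apply iSup_le
  intro a
  rw [MeasurableSpace.comap_comp]
  exact Measurable.comap_le (hf a)

lemma block_indep {Ω : Type} [m0 : MeasurableSpace Ω] {μ : Measure Ω}
    [IsProbabilityMeasure μ] {n : ℕ} {q : Fin n → Ω → ℝ} (hq : ∀ j, Measurable (q j))
    {T : Finset (Fin n)}
    (hiid : iIndepFun
      (fun i : {j : Fin n // j ∈ T} => q i) μ)
    (hindep : IndepFun (fun ω (i : {j : Fin n // j ∈ T}) => q i ω)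
      (fun ω (j : {j : Fin n // j ∉ T}) => q j ω) μ)
    {i : Fin n} (hi : i ∈ T) {E : Set Ω}
    (hE : MeasurableSet[⨆ (j : Fin n) (_ : j ≠ i),
      MeasurableSpace.comap (q j) Real.measurableSpace] E)
    {S : Set ℝ} (hS : MeasurableSet S) :
    μ ((q i ⁻¹' S) ∩ E) = μ (q i ⁻¹' S) * μ E := by
  classical
  have hi' : (⟨i, hi⟩ : {j : Fin n // j ∈ T}) ∈ ({⟨i, hi⟩} : Finset {j : Fin n // j ∈ T}) :=
    Finset.mem_singleton_self _
  have hXY := hiid.indepFun_finset {⟨i, hi⟩} (Finset.univ.erase ⟨i, hi⟩)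
      (Finset.disjoint_singleton_left.mpr (Finset.notMem_erase _ Finset.univ))
      (fun x => hq x.1)
  have hXY' := (IndepFun_iff_Indep _ _ _).mp hXY
  have hZW' := (IndepFun_iff_Indep _ _ _).mp hindep
  -- identity maps measurable wrt comap
  have hXm : Measurable[MeasurableSpace.comap
      (fun a (x : {y : {j : Fin n // j ∈ T} // y ∈ ({⟨i, hi⟩} : Finset {j : Fin n // j ∈ T})})
        => q x.1.1 a) MeasurableSpace.pi]
      (fun a (x : {y : {j : Fin n // j ∈ T} // y ∈ ({⟨i, hi⟩} : Finset {j : Fin n // j ∈ T})})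
        => q x.1.1 a) := Measurable.of_comap_le le_rfl
  have hYm : Measurable[MeasurableSpace.comap
      (fun a (x : {y : {j : Fin n // j ∈ T} // y ∈ Finset.univ.erase ⟨i, hi⟩}) => q x.1.1 a)
      MeasurableSpace.pi]
      (fun a (x : {y : {j : Fin n // j ∈ T} // y ∈ Finset.univ.erase ⟨i, hi⟩}) => q x.1.1 a) :=
    Measurable.of_comap_le le_rfl
  have hZm : Measurable[MeasurableSpace.comap
      (fun ω (x : {j : Fin n // j ∈ T}) => q x.1 ω) MeasurableSpace.pi]
      (fun ω (x : {j : Fin n // j ∈ T}) => q x.1 ω) := Measurable.of_comap_le le_rfl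
  have hWm : Measurable[MeasurableSpace.comap
      (fun ω (x : {j : Fin n // j ∉ T}) => q x.1 ω) MeasurableSpace.pi]
      (fun ω (x : {j : Fin n // j ∉ T}) => q x.1 ω) := Measurable.of_comap_le le_rfl
  have hm1X : MeasurableSpace.comap (q i) Real.measurableSpace ≤ MeasurableSpace.comap
      (fun a (x : {y : {j : Fin n // j ∈ T} // y ∈ ({⟨i, hi⟩} : Finset {j : Fin n // j ∈ T})})
        => q x.1.1 a) MeasurableSpace.pi :=
    Measurable.comap_le ((measurable_pi_apply
      (⟨⟨i, hi⟩, hi'⟩ : {y : {j : Fin n // j ∈ T} //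
        y ∈ ({⟨i, hi⟩} : Finset {j : Fin n // j ∈ T})})).comp hXm)
  have h12 : Indep (MeasurableSpace.comap (q i) Real.measurableSpace)
      (MeasurableSpace.comap
        (fun a (x : {y : {j : Fin n // j ∈ T} // y ∈ Finset.univ.erase ⟨i, hi⟩}) => q x.1.1 a)
        MeasurableSpace.pi) μ :=
    indep_mono hXY' hm1X le_rfl
  have hm1Z : MeasurableSpace.comap (q i) Real.measurableSpace ≤ MeasurableSpace.comap
      (fun ω (x : {j : Fin n // j ∈ T}) => q x.1 ω) MeasurableSpace.pi :=
    Measurable.comap_le ((measurable_pi_apply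
      (⟨i, hi⟩ : {j : Fin n // j ∈ T})).comp hZm)
  have hm2Z : (MeasurableSpace.comap
        (fun a (x : {y : {j : Fin n // j ∈ T} // y ∈ Finset.univ.erase ⟨i, hi⟩}) => q x.1.1 a)
        MeasurableSpace.pi)
      ≤ MeasurableSpace.comap
        (fun ω (x : {j : Fin n // j ∈ T}) => q x.1 ω) MeasurableSpace.pi :=
    Measurable.comap_le (measurable_pi_lambda' _ fun x =>
      (measurable_pi_apply (x.1 : {j : Fin n // j ∈ T})).comp hZm)
  have h123 : Indep
      ((MeasurableSpace.comap (q i) Real.measurableSpace) ⊔ MeasurableSpace.comap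
        (fun a (x : {y : {j : Fin n // j ∈ T} // y ∈ Finset.univ.erase ⟨i, hi⟩}) => q x.1.1 a)
        MeasurableSpace.pi)
      (MeasurableSpace.comap (fun ω (x : {j : Fin n // j ∉ T}) => q x.1 ω)
        MeasurableSpace.pi) μ :=
    indep_mono hZW' (sup_le hm1Z hm2Z) le_rfl
  have hle1 : MeasurableSpace.comap (q i) Real.measurableSpace ≤ m0 :=
    Measurable.comap_le (hq i)
  have hle2 : (MeasurableSpace.comap
        (fun a (x : {y : {j : Fin n // j ∈ T} // y ∈ Finset.univ.erase ⟨i, hi⟩}) => q x.1.1 a)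
        MeasurableSpace.pi) ≤ m0 :=
    Measurable.comap_le (measurable_pi_lambda _ fun x => hq _)
  have hle3 : (MeasurableSpace.comap (fun ω (x : {j : Fin n // j ∉ T}) => q x.1 ω)
        MeasurableSpace.pi) ≤ m0 :=
    Measurable.comap_le (measurable_pi_lambda _ fun x => hq _)
  have hgroup : Indep (MeasurableSpace.comap (q i) Real.measurableSpace)
      ((MeasurableSpace.comap
        (fun a (x : {y : {j : Fin n // j ∈ T} // y ∈ Finset.univ.erase ⟨i, hi⟩}) => q x.1.1 a)
        MeasurableSpace.pi) ⊔
       (MeasurableSpace.comap (fun ω (x : {j : Fin n // j ∉ T}) => q x.1 ω)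
        MeasurableSpace.pi)) μ :=
    indep_grouping hle1 hle2 hle3 h12 h123
  have hsup_le : (⨆ (j : Fin n) (_ : j ≠ i),
      MeasurableSpace.comap (q j) Real.measurableSpace)
      ≤ (MeasurableSpace.comap
        (fun a (x : {y : {j : Fin n // j ∈ T} // y ∈ Finset.univ.erase ⟨i, hi⟩}) => q x.1.1 a)
        MeasurableSpace.pi) ⊔
       (MeasurableSpace.comap (fun ω (x : {j : Fin n // j ∉ T}) => q x.1 ω)
        MeasurableSpace.pi) := by
    apply iSup_le
    intro j
    apply iSup_le
    intro hji
    by_cases hjT : j ∈ T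
    · refine le_trans ?_ le_sup_left
      have hxmem : (⟨j, hjT⟩ : {j : Fin n // j ∈ T}) ∈ Finset.univ.erase ⟨i, hi⟩ :=
        Finset.mem_erase.mpr ⟨fun h => hji (congrArg Subtype.val h), Finset.mem_univ _⟩
      exact Measurable.comap_le ((measurable_pi_apply
        (⟨⟨j, hjT⟩, hxmem⟩ : {y : {j : Fin n // j ∈ T} //
          y ∈ Finset.univ.erase ⟨i, hi⟩})).comp hYm)
    · refine le_trans ?_ le_sup_right
      exact Measurable.comap_le ((measurable_pi_apply
        (⟨j, hjT⟩ : {j : Fin n // j ∉ T})).comp hWm)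
  have hfin : Indep (MeasurableSpace.comap (q i) Real.measurableSpace)
      (⨆ (j : Fin n) (_ : j ≠ i), MeasurableSpace.comap (q j) Real.measurableSpace) μ :=
    indep_mono hgroup le_rfl hsup_le
  rw [Indep_iff] at hfin
  exact hfin _ _ ⟨S, hS, rfl⟩ hE


end FdrAux

/-- Upper FDR bound in the BI model: if `α_{j:n} ≤ jc/n` for all `j ≤ k` with `0 < c < 1`,
then the step-up test has `FDR ≤ c·n₀/n + P(R > k)`. -/
theorem fdr_upper_bound
    {Ω : Type} [MeasurableSpace Ω] (μ : Measure Ω) [IsProbabilityMeasure μ]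
    (n n₀ : ℕ) (hn : 0 < n) (hn₀ : n₀ ≤ n)
    (q : Fin n → Ω → ℝ) (hq : ∀ j, Measurable (q j))
    (T : Finset (Fin n)) (hT : T.card = n₀)
    (αc : ℕ → ℝ) (hpos : 0 < αc 1) (hlt : αc n < 1)
    (hmono : ∀ i j, 1 ≤ i → i ≤ j → j ≤ n → αc i ≤ αc j)
    (hunif : ∀ i ∈ T, μ.map (q i) = volume.restrict (Set.Ioo 0 1))
    (hiid : iIndepFun
      (fun i : {j : Fin n // j ∈ T} => q i) μ)
    (hindep : IndepFun (fun ω (i : {j : Fin n // j ∈ T}) => q i ω)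
      (fun ω (j : {j : Fin n // j ∉ T}) => q j ω) μ)
    (k : ℕ) (c : ℝ) (hc0 : 0 < c) (hc1 : c < 1)
    (hαc : ∀ j, 1 ≤ j → j ≤ k → αc j ≤ (j : ℝ) * c / n) :
    ∫ ω, (numFalseRej n αc q T ω : ℝ) / (numRej n αc q ω : ℝ) ∂μ
      ≤ c * n₀ / n + (μ {ω | k < numRej n αc q ω}).toReal := by
  classical
  set F : Ω → ℝ := fun ω => (numFalseRej n αc q T ω : ℝ) / (numRej n αc q ω : ℝ) with hF
  set A : Set Ω := {ω | k < numRej n αc q ω} with hAdef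
  set g : Fin n → Ω → ℝ := fun i ω =>
    if (q i ω ≤ αc (numRej n αc (Function.update q i 0) ω) ∧
        numRej n αc (Function.update q i 0) ω ≤ k)
      then ((numRej n αc (Function.update q i 0) ω : ℝ))⁻¹ else 0 with hgdef
  set trm : Fin n → ℕ → Ω → ℝ := fun i r ω =>
    if (numRej n αc (Function.update q i 0) ω = r ∧ q i ω ≤ αc r ∧ r ≤ k)
      then ((r : ℝ))⁻¹ else 0 with htrmdef
  -- measurability basics
  have hRmeas : Measurable (numRej n αc q) := FdrAux.measurable_numRej hq
  have hqupd : ∀ (i j : Fin n), Measurable (Function.update q i 0 j) := by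
    intro i j
    by_cases hji : j = i
    · subst hji; rw [Function.update_self]; exact measurable_const
    · rw [Function.update_of_ne hji]; exact hq j
  have hR'meas : ∀ i : Fin n, Measurable (numRej n αc (Function.update q i 0)) :=
    fun i => FdrAux.measurable_numRej (hqupd i)
  have hA : MeasurableSet A := by
    have := hRmeas (MeasurableSet.of_discrete (s := {x : ℕ | k < x}))
    simpa [hAdef] using this
  have hF01 : ∀ ω, 0 ≤ F ω ∧ F ω ≤ 1 := by
    intro ω
    constructor
    · apply div_nonneg <;> positivity
    · by_cases h1 : 1 ≤ numRej n αc q ω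
      · have hle : numFalseRej n αc q T ω ≤ numRej n αc q ω := by
          have hVc : numFalseRej n αc q T ω
              ≤ FdrAux.cnt n αc q (max (numRej n αc q ω) 1) ω :=
            Finset.card_le_card (Finset.filter_subset_filter _ (Finset.subset_univ T))
          rwa [max_eq_left h1, FdrAux.cnt_numRej hmono h1] at hVc
        apply div_le_one_of_le₀
        · exact_mod_cast hle
        · positivity
      · have h0 : numRej n αc q ω = 0 := by omega
        simp [hF, h0]
  have hVmeas : Measurable fun ω => numFalseRej n αc q T ω := by
    have hset : ∀ j : Fin n, MeasurableSet {ω | q j ω ≤ αc (max (numRej n αc q ω) 1)} := by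
      intro j
      have heq : {ω | q j ω ≤ αc (max (numRej n αc q ω) 1)}
          = ⋃ r : ℕ, ({ω | numRej n αc q ω = r} ∩ {ω | q j ω ≤ αc (max r 1)}) := by
        ext ω
        simp only [Set.mem_iUnion, Set.mem_inter_iff, Set.mem_setOf_eq]
        exact ⟨fun h => ⟨numRej n αc q ω, rfl, h⟩, fun ⟨r, hr, h⟩ => hr ▸ h⟩
      rw [heq]
      refine MeasurableSet.iUnion fun r => MeasurableSet.inter ?_ (hq j measurableSet_Iic)
      have hm := hRmeas (MeasurableSet.of_discrete (s := {r}))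
      have h2 : {ω | numRej n αc q ω = r} = numRej n αc q ⁻¹' {r} := by ext; simp
      rw [h2]; exact hm
    simp only [numFalseRej, Finset.card_filter]
    exact Finset.measurable_sum _ fun j _ =>
      Measurable.ite (hset j) measurable_const measurable_const
  have hFmeas : Measurable F := by
    apply Measurable.div
    · exact (measurable_from_top (f := fun x : ℕ => (x : ℝ))).comp hVmeas
    · exact (measurable_from_top (f := fun x : ℕ => (x : ℝ))).comp hRmeas
  have hFint : Integrable F μ := by
    refine (integrable_const (1:ℝ)).mono' hFmeas.aestronglyMeasurable (ae_of_all _ fun ω => ?_)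
    rw [Real.norm_eq_abs, abs_of_nonneg (hF01 ω).1]
    exact (hF01 ω).2
  -- key independence
  have hkey : ∀ i ∈ T, ∀ r : ℕ,
      μ ((q i ⁻¹' Set.Iic (αc r)) ∩ {ω | numRej n αc (Function.update q i 0) ω = r})
        = μ (q i ⁻¹' Set.Iic (αc r)) * μ {ω | numRej n αc (Function.update q i 0) ω = r} := by
    intro i hi r
    have hR'm : Measurable[⨆ (j : Fin n) (_ : j ≠ i),
        MeasurableSpace.comap (q j) Real.measurableSpace]
        (numRej n αc (Function.update q i 0)) := by
      apply FdrAux.measurable_numRej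
      intro j
      by_cases hji : j = i
      · subst hji; rw [Function.update_self]; exact measurable_const
      · rw [Function.update_of_ne hji]
        exact Measurable.of_comap_le (le_iSup₂
          (f := fun (j : Fin n) (_ : j ≠ i) =>
            MeasurableSpace.comap (q j) Real.measurableSpace) j hji)
    have hE : MeasurableSet[⨆ (j : Fin n) (_ : j ≠ i),
        MeasurableSpace.comap (q j) Real.measurableSpace]
        {ω | numRej n αc (Function.update q i 0) ω = r} := by
      have hm := hR'm (MeasurableSet.of_discrete (s := ({r} : Set ℕ)))
      have h2 : {ω | numRej n αc (Function.update q i 0) ω = r}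
          = numRej n αc (Function.update q i 0) ⁻¹' {r} := by ext; simp
      rw [h2]; exact hm
    exact FdrAux.block_indep hq hiid hindep hi hE measurableSet_Iic
  -- uniform marginal
  have hmarg : ∀ i ∈ T, ∀ r : ℕ, 1 ≤ r → r ≤ n →
      μ (q i ⁻¹' Set.Iic (αc r)) = ENNReal.ofReal (αc r) := by
    intro i hi r h1 hn'
    have h1' : αc r < 1 := lt_of_le_of_lt (hmono r n h1 hn' le_rfl) hlt
    rw [← Measure.map_apply (hq i) measurableSet_Iic, hunif i hi,
      Measure.restrict_apply measurableSet_Iic]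
    have hset : Set.Iic (αc r) ∩ Set.Ioo 0 1 = Set.Ioc 0 (αc r) := by
      ext x
      simp only [Set.mem_inter_iff, Set.mem_Iic, Set.mem_Ioo, Set.mem_Ioc]
      constructor
      · rintro ⟨h, h2, h3⟩; exact ⟨h2, h⟩
      · rintro ⟨h2, h⟩; exact ⟨h, h2, lt_of_le_of_lt h h1'⟩
    rw [hset, Real.volume_Ioc]
    norm_num
  -- pointwise identity
  have hptwise : ∀ ω, Set.indicator Aᶜ F ω = ∑ i ∈ T, g i ω := by
    intro ω
    have hgi : ∀ i : Fin n, g i ω =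
        if (q i ω ≤ αc (max (numRej n αc q ω) 1) ∧ numRej n αc q ω ≤ k)
        then ((numRej n αc q ω : ℝ))⁻¹ else 0 := fun i => FdrAux.key_cond hn hpos hmono k
    by_cases hω : ω ∈ Aᶜ
    · have hRk : numRej n αc q ω ≤ k := by
        have : ¬ k < numRej n αc q ω := hω
        omega
      rw [Set.indicator_of_mem hω]
      have hVsum : (numFalseRej n αc q T ω : ℝ)
          = ∑ i ∈ T, (if q i ω ≤ αc (max (numRej n αc q ω) 1) then (1:ℝ) else 0) := by
        rw [numFalseRej, Finset.card_filter, Nat.cast_sum]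
        exact Finset.sum_congr rfl fun i _ => by split <;> simp
      have hFeq : F ω = ∑ i ∈ T,
          (if q i ω ≤ αc (max (numRej n αc q ω) 1) then (1:ℝ) else 0)
            / (numRej n αc q ω : ℝ) := by
        rw [hF]
        simp only []
        rw [hVsum, Finset.sum_div]
      rw [hFeq]
      refine Finset.sum_congr rfl fun i _ => ?_
      rw [hgi i]
      by_cases hP : q i ω ≤ αc (max (numRej n αc q ω) 1)
      · rw [if_pos hP, if_pos ⟨hP, hRk⟩, one_div]
      · rw [if_neg hP, if_neg (fun hc => hP hc.1), zero_div]
    · rw [Set.indicator_of_notMem hω]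
      have hRk : k < numRej n αc q ω := by
        simp only [Set.mem_compl_iff, not_not] at hω
        exact hω
      symm
      apply Finset.sum_eq_zero
      intro i _
      rw [hgi i, if_neg]
      rintro ⟨-, h2⟩
      omega
  -- representation of g as sum
  have hrep : ∀ (i : Fin n) (ω : Ω), g i ω = ∑ r ∈ Finset.Icc 1 n, trm i r ω := by
    intro i ω
    have h1 : 1 ≤ numRej n αc (Function.update q i 0) ω :=
      FdrAux.one_le_numRej_update hn hpos
    have h2 : numRej n αc (Function.update q i 0) ω ≤ n := FdrAux.numRej_le_n _ _
    rw [Finset.sum_eq_single_of_mem (numRej n αc (Function.update q i 0) ω)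
      (Finset.mem_Icc.mpr ⟨h1, h2⟩) (fun r _ hne => if_neg fun hc => hne hc.1.symm)]
    simp only [htrmdef, hgdef, true_and]
  -- each term integrable
  have htrmset : ∀ (i : Fin n) (r : ℕ), MeasurableSet
      ((q i ⁻¹' Set.Iic (αc r)) ∩ {ω | numRej n αc (Function.update q i 0) ω = r}) := by
    intro i r
    refine (hq i measurableSet_Iic).inter ?_
    have hm := hR'meas i (MeasurableSet.of_discrete (s := {r}))
    have h2 : {ω | numRej n αc (Function.update q i 0) ω = r}
        = numRej n αc (Function.update q i 0) ⁻¹' {r} := by ext; simp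
    rw [h2]; exact hm
  have htrmeq : ∀ (i : Fin n) (r : ℕ), r ≤ k → trm i r = Set.indicator
      ((q i ⁻¹' Set.Iic (αc r)) ∩ {ω | numRej n αc (Function.update q i 0) ω = r})
      (fun _ => ((r : ℝ))⁻¹) := by
    intro i r hrk
    funext ω
    by_cases h1 : numRej n αc (Function.update q i 0) ω = r <;>
      by_cases h2 : q i ω ≤ αc r <;>
      simp [htrmdef, Set.indicator_apply, Set.mem_inter_iff, Set.mem_setOf_eq,
        Set.mem_preimage, h1, h2, hrk]
  have htrmint : ∀ (i : Fin n) (r : ℕ), Integrable (trm i r) μ := by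
    intro i r
    by_cases hrk : r ≤ k
    · rw [htrmeq i r hrk]
      exact (integrable_const _).indicator (htrmset i r)
    · have : trm i r = fun _ => (0:ℝ) := funext fun ω => if_neg fun hc => hrk hc.2.2
      rw [this]
      exact integrable_const 0
  -- term integral bound
  have htermle : ∀ i ∈ T, ∀ r ∈ Finset.Icc 1 n,
      ∫ ω, trm i r ω ∂μ
        ≤ (c / n) * (μ {ω | numRej n αc (Function.update q i 0) ω = r}).toReal := by
    intro i hi r hr
    obtain ⟨h1, hn'⟩ := Finset.mem_Icc.mp hr
    by_cases hrk : r ≤ k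
    · have hα0 : 0 < αc r := lt_of_lt_of_le hpos (hmono 1 r le_rfl h1 hn')
      rw [htrmeq i r hrk, integral_indicator_const _ (htrmset i r), measureReal_def,
        hkey i hi r, hmarg i hi r h1 hn', ENNReal.toReal_mul,
        ENNReal.toReal_ofReal hα0.le, smul_eq_mul]
      set t := (μ {ω | numRej n αc (Function.update q i 0) ω = r}).toReal with htdef
      have ht : 0 ≤ t := ENNReal.toReal_nonneg
      have hb : αc r ≤ r * c / n := hαc r h1 hrk
      have hr0 : (0:ℝ) < r := by exact_mod_cast h1
      calc αc r * t * (r:ℝ)⁻¹ = (αc r * (r:ℝ)⁻¹) * t := by ring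
        _ ≤ (((r:ℝ) * c / n) * (r:ℝ)⁻¹) * t := by
            apply mul_le_mul_of_nonneg_right _ ht
            exact mul_le_mul_of_nonneg_right hb (by positivity)
        _ = (c / (n:ℝ)) * ((r:ℝ) * (r:ℝ)⁻¹) * t := by ring
        _ = (c / n) * t := by rw [mul_inv_cancel₀ (ne_of_gt hr0), mul_one]
    · have hz : trm i r = fun _ => (0:ℝ) := funext fun ω => if_neg fun hc => hrk hc.2.2
      rw [hz, integral_zero]
      positivity
  -- sum of measures bound
  have hArmeas : ∀ (i : Fin n) (r : ℕ),
      MeasurableSet {ω | numRej n αc (Function.update q i 0) ω = r} := by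
    intro i r
    have hm := hR'meas i (MeasurableSet.of_discrete (s := ({r} : Set ℕ)))
    have h2 : {ω | numRej n αc (Function.update q i 0) ω = r}
        = numRej n αc (Function.update q i 0) ⁻¹' {r} := by ext; simp
    rw [h2]; exact hm
  have hsum_le : ∀ i : Fin n,
      ∑ r ∈ Finset.Icc 1 n, (μ {ω | numRej n αc (Function.update q i 0) ω = r}).toReal ≤ 1 := by
    intro i
    have hdisj : ((Finset.Icc 1 n : Finset ℕ) : Set ℕ).PairwiseDisjoint
        (fun r => {ω | numRej n αc (Function.update q i 0) ω = r}) := by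
      intro a _ b _ hab
      exact Set.disjoint_left.mpr fun ω h1 h2 => hab (h1.symm.trans h2)
    have hμsum : ∑ r ∈ Finset.Icc 1 n, μ {ω | numRej n αc (Function.update q i 0) ω = r} ≤ 1 := by
      rw [← measure_biUnion_finset hdisj (fun r _ => hArmeas i r)]
      exact prob_le_one
    calc ∑ r ∈ Finset.Icc 1 n, (μ {ω | numRej n αc (Function.update q i 0) ω = r}).toReal
        = (∑ r ∈ Finset.Icc 1 n, μ {ω | numRej n αc (Function.update q i 0) ω = r}).toReal :=
          (ENNReal.toReal_sum fun r _ => measure_ne_top μ _).symm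
      _ ≤ (1 : ENNReal).toReal := ENNReal.toReal_mono ENNReal.one_ne_top hμsum
      _ = 1 := ENNReal.toReal_one
  -- per-i bound
  have hgint : ∀ i : Fin n, Integrable (g i) μ := by
    intro i
    have : g i = fun ω => ∑ r ∈ Finset.Icc 1 n, trm i r ω := funext (hrep i)
    rw [this]
    exact integrable_finset_sum _ fun r _ => htrmint i r
  have hgi_le : ∀ i ∈ T, ∫ ω, g i ω ∂μ ≤ c / n := by
    intro i hi
    have h1 : (∫ ω, g i ω ∂μ) = ∑ r ∈ Finset.Icc 1 n, ∫ ω, trm i r ω ∂μ := by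
      rw [show (fun ω => g i ω) = fun ω => ∑ r ∈ Finset.Icc 1 n, trm i r ω from funext (hrep i)]
      exact integral_finset_sum _ fun r _ => htrmint i r
    rw [h1]
    calc ∑ r ∈ Finset.Icc 1 n, ∫ ω, trm i r ω ∂μ
        ≤ ∑ r ∈ Finset.Icc 1 n,
            (c / n) * (μ {ω | numRej n αc (Function.update q i 0) ω = r}).toReal :=
          Finset.sum_le_sum fun r hr => htermle i hi r hr
      _ = (c / n) * ∑ r ∈ Finset.Icc 1 n,
            (μ {ω | numRej n αc (Function.update q i 0) ω = r}).toReal := by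
          rw [Finset.mul_sum]
      _ ≤ (c / n) * 1 := by
          have hcn : 0 ≤ c / n := by positivity
          exact mul_le_mul_of_nonneg_left (hsum_le i) hcn
      _ = c / n := mul_one _
  -- assemble
  have hsplit : ∫ ω, F ω ∂μ = (∫ ω in A, F ω ∂μ) + ∫ ω in Aᶜ, F ω ∂μ :=
    (integral_add_compl hA hFint).symm
  have hA1 : ∫ ω in A, F ω ∂μ ≤ (μ A).toReal := by
    have h2 : ∫ ω in A, F ω ∂μ ≤ ∫ _ω in A, (1:ℝ) ∂μ :=
      setIntegral_mono_on hFint.integrableOn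
        (integrableOn_const (measure_lt_top μ A).ne) hA fun ω _ => (hF01 ω).2
    simpa [setIntegral_const, measureReal_def] using h2
  have hA2 : ∫ ω in Aᶜ, F ω ∂μ ≤ c * n₀ / n := by
    rw [← integral_indicator hA.compl,
      show (Set.indicator Aᶜ fun ω => F ω) = fun ω => ∑ i ∈ T, g i ω from funext hptwise,
      integral_finset_sum T fun i _ => hgint i]
    calc ∑ i ∈ T, ∫ ω, g i ω ∂μ ≤ ∑ _i ∈ T, c / n := Finset.sum_le_sum fun i hi => hgi_le i hi
      _ = n₀ * (c / n) := by rw [Finset.sum_const, hT, nsmul_eq_mul]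
      _ = c * n₀ / n := by ring
  calc ∫ ω, F ω ∂μ = (∫ ω in A, F ω ∂μ) + ∫ ω in Aᶜ, F ω ∂μ := hsplit
    _ ≤ (μ A).toReal + c * n₀ / n := add_le_add hA1 hA2
    _ = c * n₀ / n + (μ A).toReal := add_comm _ _
end

section
/- With h(n₀, α) defined by h(1, α) = α and the recursion h(n₀, α) = (n₀α/n)(h(n₀−1, α) + n − n₀ + 1) for 2 ≤ n₀ ≤ n, one has the closed form h(n₀, α) = (n₀!/n^{n₀−1})·α^{n₀} + Σ_{j=1}^{n₀−1} (n₀!/j!)·(α/n)^{n₀−j}·(n−j). -/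
open Finset

/-- Closed form for the recursion `h(1,α) = α`,
`h(n₀,α) = (n₀α/n)(h(n₀−1,α) + n − n₀ + 1)`:
`h(n₀,α) = (n₀!/n^{n₀−1})α^{n₀} + Σ_{j=1}^{n₀−1} (n₀!/j!)(α/n)^{n₀−j}(n−j)`. -/
theorem recursion_closed_form (n : ℕ) (hn : 1 ≤ n) (a : ℝ) (h : ℕ → ℝ)
    (h1 : h 1 = a)
    (hrec : ∀ n₀, 2 ≤ n₀ → n₀ ≤ n →
      h n₀ = (n₀ : ℝ) * a / n * (h (n₀ - 1) + (n : ℝ) - n₀ + 1)) :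
    ∀ n₀, 1 ≤ n₀ → n₀ ≤ n →
      h n₀ = (n₀.factorial : ℝ) / (n : ℝ) ^ (n₀ - 1) * a ^ n₀
        + ∑ j ∈ Finset.Icc 1 (n₀ - 1),
            (n₀.factorial : ℝ) / (j.factorial : ℝ) * (a / n) ^ (n₀ - j) * ((n : ℝ) - j) := by
  have hn0 : (n : ℝ) ≠ 0 := Nat.cast_ne_zero.mpr (by omega)
  intro n₀ h1' h2'
  induction n₀, h1' using Nat.le_induction with
  | base => simp [h1]
  | succ m hm ih =>
    obtain ⟨k, rfl⟩ : ∃ k, m = k + 1 := ⟨m - 1, by omega⟩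
    rw [hrec (k+1+1) (by omega) h2']
    simp only [Nat.add_sub_cancel]
    rw [ih (by omega)]
    simp only [Nat.add_sub_cancel]
    rw [Finset.sum_Icc_succ_top (show 1 ≤ k+1 by omega)]
    set A : ℝ := ((k+1+1:ℕ) : ℝ) * a / n with hA
    set X : ℝ := ((k+1).factorial : ℝ) / (n : ℝ) ^ k * a ^ (k+1) with hX
    set S : ℝ := ∑ j ∈ Finset.Icc 1 k,
      ((k+1).factorial : ℝ) / (j.factorial : ℝ) * (a / n) ^ (k+1 - j) * ((n : ℝ) - j) with hS
    have hfac : (((k+2)).factorial : ℝ) = (k+2) * ((k+1).factorial : ℝ) := by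
      rw [Nat.factorial_succ]; push_cast; ring
    have key : A * S = ∑ j ∈ Finset.Icc 1 k,
        (((k+1+1)).factorial : ℝ) / (j.factorial : ℝ) * (a / n) ^ (k+1+1 - j) * ((n : ℝ) - j) := by
      rw [hS, Finset.mul_sum]
      refine Finset.sum_congr rfl fun j hj => ?_
      simp only [Finset.mem_Icc] at hj
      have e1 : k + 1 + 1 - j = (k + 1 - j) + 1 := by omega
      rw [e1, show k+1+1 = k+2 from rfl, hfac, pow_succ]
      rw [hA, show ((k+1+1:ℕ):ℝ) = (k:ℝ)+2 by push_cast; ring]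
      ring
    have h2 : A * X + A * ((n : ℝ) - ((k+1+1:ℕ):ℝ) + 1)
        = (((k+1+1)).factorial : ℝ) / (n : ℝ) ^ (k+1) * a ^ (k+1+1)
          + (((k+1+1)).factorial : ℝ) / (((k+1)).factorial : ℝ) * (a / n) ^ (k+1+1 - (k+1))
            * ((n : ℝ) - ((k+1:ℕ):ℝ)) := by
      have e2 : k + 1 + 1 - (k+1) = 1 := by omega
      rw [e2, hA, hX, show k+1+1 = k+2 from rfl, hfac, pow_succ]
      have hfacne : (((k+1)).factorial : ℝ) ≠ 0 := Nat.cast_ne_zero.mpr (Nat.factorial_ne_zero _)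
      have hpne : ((n:ℝ)) ^ k ≠ 0 := pow_ne_zero _ hn0
      push_cast
      field_simp
      ring
    have expand : A * (X + S + (n : ℝ) - ((k+1+1:ℕ):ℝ) + 1)
        = A * X + A * ((n : ℝ) - ((k+1+1:ℕ):ℝ) + 1) + A * S := by ring
    rw [expand, key, h2]
    ring
end

section
/- In the Dirac-uniform configuration with n₀ true p-values i.i.d. uniform(0,1) and n−n₀ false p-values equal to 0, for any step-up test with deterministic non-decreasing critical values 0 < α_{1:n} ≤ … ≤ α_{n:n} < 1, the expected number of false rejections satisfies E_DU(V | n₀) ≥ n₀·α_{n+1−n₀:n}. -/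
open MeasureTheory ProbabilityTheory Finset
open scoped Classical

lemma aux_sup_filter_eq (s : Finset ℕ) (p : ℕ → Prop) [DecidablePred p] :
    (s.filter p).sup id = s.sup (fun i => if p i then i else 0) := by
  apply le_antisymm
  · exact Finset.sup_le fun i hi => by
      rcases Finset.mem_filter.mp hi with ⟨hs, hp⟩
      simpa [hp] using Finset.le_sup (f := fun i => if p i then i else 0) hs
  · exact Finset.sup_le fun i hi => by
      by_cases hp : p i
      · simpa [hp] using Finset.le_sup (f := id) (Finset.mem_filter.mpr ⟨hi, hp⟩)
      · simp [hp]

lemma aux_meas_card {Ω ι : Type*} [Fintype ι] [MeasurableSpace Ω] (s : Finset ι)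
    (P : ι → Ω → Prop) (h : ∀ j, MeasurableSet {ω | P j ω}) :
    Measurable fun ω => ((s.filter fun j => P j ω).card) := by
  simp only [Finset.card_filter]
  exact Finset.measurable_sum _ fun j _ => Measurable.ite (h j) measurable_const measurable_const

lemma aux_meas_sup {Ω : Type*} [MeasurableSpace Ω] (s : Finset ℕ) (f : ℕ → Ω → ℕ)
    (h : ∀ i, Measurable (f i)) : Measurable fun ω => s.sup (fun i => f i ω) := by
  classical
  induction s using Finset.induction_on with
  | empty => simpa using measurable_const
  | insert _ _ _ ih =>
      simp only [Finset.sup_insert]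
      exact (h _).sup ih

lemma aux_meas_numRej {Ω ι : Type*} [Fintype ι] [MeasurableSpace Ω] (n : ℕ) (αc : ℕ → ℝ)
    (q : ι → Ω → ℝ) (hq : ∀ j, Measurable (q j)) :
    Measurable fun ω => numRej n αc q ω := by
  have hc : ∀ i : ℕ, Measurable fun ω => ((Finset.univ.filter fun j => q j ω ≤ αc i).card) :=
    fun i => aux_meas_card _ _ fun j => measurableSet_le (hq j) measurable_const
  have : (fun ω => numRej n αc q ω) =
      fun ω => (Finset.Icc 1 n).sup
        (fun i => if i ≤ (Finset.univ.filter fun j => q j ω ≤ αc i).card then i else 0) := by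
    funext ω
    exact aux_sup_filter_eq _ _
  rw [this]
  refine aux_meas_sup _ _ fun i => ?_
  have : MeasurableSet {ω : Ω | i ≤ (Finset.univ.filter fun j => q j ω ≤ αc i).card} :=
    (hc i) (MeasurableSet.of_discrete (s := Set.Ici i))
  exact Measurable.ite this measurable_const measurable_const

lemma aux_meas_numFalseRej {Ω ι : Type*} [Fintype ι] [MeasurableSpace Ω] (n : ℕ) (αc : ℕ → ℝ)
    (q : ι → Ω → ℝ) (hq : ∀ j, Measurable (q j)) (T : Finset ι) :
    Measurable fun ω => numFalseRej n αc q T ω := by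
  refine aux_meas_card _ _ fun j => ?_
  have h1 : Measurable fun ω => αc (max (numRej n αc q ω) 1) :=
    (measurable_from_top (f := fun k : ℕ => αc (max k 1))).comp (aux_meas_numRej n αc q hq)
  exact measurableSet_le (hq j) h1

/-- In the Dirac-uniform configuration (`n₀` true uniform `p`-values, `n − n₀` false
`p`-values equal to `0`), any step-up test with non-decreasing critical values satisfies
`E_DU(V | n₀) ≥ n₀·α_{n+1−n₀:n}`. No dependence assumption on the uniforms is made. -/
theorem du_expected_false_rejections_lower_bound
    {Ω : Type} [MeasurableSpace Ω] (μ : Measure Ω) [IsProbabilityMeasure μ]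
    (n n₀ : ℕ) (hn₀1 : 1 ≤ n₀) (hn₀ : n₀ ≤ n)
    (q : Fin n → Ω → ℝ) (hq : ∀ j, Measurable (q j))
    (T : Finset (Fin n)) (hT : T.card = n₀)
    (αc : ℕ → ℝ) (hpos : 0 < αc 1) (hlt : αc n < 1)
    (hmono : ∀ i j, 1 ≤ i → i ≤ j → j ≤ n → αc i ≤ αc j)
    (hunif : ∀ i ∈ T, μ.map (q i) = volume.restrict (Set.Ioo 0 1))
    (hfalse : ∀ j ∉ T, ∀ᵐ ω ∂μ, q j ω = 0) :
    (n₀ : ℝ) * αc (n + 1 - n₀) ≤ ∫ ω, (numFalseRej n αc q T ω : ℝ) ∂μ := by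
  set k : ℕ := n + 1 - n₀ with hk
  have hk1 : 1 ≤ k := by omega
  have hkn : k ≤ n := by omega
  have hn1 : 1 ≤ n := le_trans hn₀1 hn₀
  set c : ℝ := αc k with hc
  have hc0 : 0 < c := lt_of_lt_of_le hpos (hmono 1 k le_rfl hk1 hkn)
  have hc1 : c < 1 := lt_of_le_of_lt (hmono k n hk1 hkn le_rfl) hlt
  -- good event: all false p-values are 0
  have hgood : ∀ᵐ ω ∂μ, ∀ j ∉ T, q j ω = 0 := by
    rw [MeasureTheory.ae_all_iff]
    intro j
    by_cases hj : j ∈ T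
    · filter_upwards with ω hj'; exact absurd hj hj'
    · filter_upwards [hfalse j hj] with ω h _; exact h
  -- pointwise bound on the good event
  have hpt : ∀ᵐ ω ∂μ,
      ((T.filter fun j => q j ω ≤ c).card : ℝ) ≤ (numFalseRej n αc q T ω : ℝ) := by
    filter_upwards [hgood] with ω hω
    have hsub : (T.filter fun j => q j ω ≤ c) ⊆
        (T.filter fun j => q j ω ≤ αc (max (numRej n αc q ω) 1)) := by
      intro j hj
      rcases Finset.mem_filter.mp hj with ⟨hjT, hjc⟩
      -- the set {j' : q j' ω ≤ αc k} contains Tᶜ ∪ {j}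
      have hsub2 : insert j Tᶜ ⊆ (Finset.univ.filter fun j' => q j' ω ≤ αc k) := by
        intro j' hj'
        rcases Finset.mem_insert.mp hj' with h | h
        · subst h; exact Finset.mem_filter.mpr ⟨Finset.mem_univ _, hjc⟩
        · refine Finset.mem_filter.mpr ⟨Finset.mem_univ _, ?_⟩
          rw [hω j' (Finset.mem_compl.mp h)]
          exact le_of_lt hc0
      have hcardc : (insert j Tᶜ).card = k := by
        rw [Finset.card_insert_of_notMem (by simpa using hjT), Finset.card_compl, hT]
        simp only [Fintype.card_fin]
        omega
      have hkcard : k ≤ (Finset.univ.filter fun j' => q j' ω ≤ αc k).card := by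
        exact le_trans (le_of_eq hcardc.symm) (Finset.card_le_card hsub2)
      have hkR : k ≤ numRej n αc q ω := by
        have hmem : k ∈ (Finset.Icc 1 n).filter fun i =>
            i ≤ (Finset.univ.filter fun j' => q j' ω ≤ αc i).card :=
          Finset.mem_filter.mpr ⟨Finset.mem_Icc.mpr ⟨hk1, hkn⟩, hkcard⟩
        exact Finset.le_sup (f := id) hmem
      have hRn : max (numRej n αc q ω) 1 ≤ n := by
        refine max_le ?_ hn1
        refine Finset.sup_le fun i hi => ?_
        exact (Finset.mem_Icc.mp (Finset.mem_filter.mp hi).1).2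
      have hkR' : k ≤ max (numRej n αc q ω) 1 := le_trans hkR (le_max_left _ _)
      have : c ≤ αc (max (numRej n αc q ω) 1) := hmono k _ hk1 hkR' hRn
      exact Finset.mem_filter.mpr ⟨hjT, le_trans hjc this⟩
    exact_mod_cast Nat.cast_le.mpr (Finset.card_le_card hsub)
  -- measurability and integrability
  have hmeasV : Measurable fun ω => (numFalseRej n αc q T ω : ℝ) :=
    Measurable.comp measurable_from_top (aux_meas_numFalseRej n αc q hq T)
  have hmeasg : Measurable fun ω => ((T.filter fun j => q j ω ≤ c).card : ℝ) :=
    Measurable.comp measurable_from_top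
      (aux_meas_card _ _ fun j => measurableSet_le (hq j) measurable_const)
  have hintV : Integrable (fun ω => (numFalseRej n αc q T ω : ℝ)) μ := by
    refine Integrable.mono' (integrable_const (n₀ : ℝ)) hmeasV.aestronglyMeasurable ?_
    filter_upwards with ω
    rw [Real.norm_eq_abs, abs_of_nonneg (by positivity)]
    have : numFalseRej n αc q T ω ≤ n₀ := by
      rw [← hT]; exact Finset.card_filter_le _ _
    exact_mod_cast this
  have hintg : Integrable (fun ω => ((T.filter fun j => q j ω ≤ c).card : ℝ)) μ := by
    refine Integrable.mono' (integrable_const (n₀ : ℝ)) hmeasg.aestronglyMeasurable ?_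
    filter_upwards with ω
    rw [Real.norm_eq_abs, abs_of_nonneg (by positivity)]
    have : (T.filter fun j => q j ω ≤ c).card ≤ n₀ := by
      rw [← hT]; exact Finset.card_filter_le _ _
    exact_mod_cast this
  -- compute the integral of g
  have hprob : ∀ j ∈ T, μ {ω | q j ω ≤ c} = ENNReal.ofReal c := by
    intro j hj
    have h1 : {ω | q j ω ≤ c} = (q j) ⁻¹' (Set.Iic c) := rfl
    rw [h1, ← Measure.map_apply (hq j) measurableSet_Iic, hunif j hj,
      Measure.restrict_apply measurableSet_Iic]
    have h2 : Set.Iic c ∩ Set.Ioo (0:ℝ) 1 = Set.Ioc 0 c := by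
      ext x
      simp only [Set.mem_inter_iff, Set.mem_Iic, Set.mem_Ioo, Set.mem_Ioc]
      constructor
      · rintro ⟨h, h0, _⟩; exact ⟨h0, h⟩
      · rintro ⟨h0, h⟩; exact ⟨h, h0, lt_of_le_of_lt h hc1⟩
    rw [h2, Real.volume_Ioc]
    simp
  have hg : ∫ ω, ((T.filter fun j => q j ω ≤ c).card : ℝ) ∂μ = (n₀ : ℝ) * c := by
    have heq : ∀ ω, ((T.filter fun j => q j ω ≤ c).card : ℝ) =
        ∑ j ∈ T, Set.indicator {ω | q j ω ≤ c} (fun _ => (1:ℝ)) ω := by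
      intro ω
      rw [Finset.card_filter]
      push_cast
      refine Finset.sum_congr rfl fun j _ => ?_
      by_cases h : q j ω ≤ c <;> simp [Set.indicator, h]
    simp_rw [heq]
    rw [integral_finset_sum]
    · have : ∀ j ∈ T, ∫ ω, Set.indicator {ω | q j ω ≤ c} (fun _ => (1:ℝ)) ω ∂μ = c := by
        intro j hj
        rw [MeasureTheory.integral_indicator_const (1:ℝ)
          (measurableSet_le (hq j) measurable_const), measureReal_def, hprob j hj]
        rw [smul_eq_mul, mul_one, ENNReal.toReal_ofReal (le_of_lt hc0)]
      rw [Finset.sum_congr rfl this, Finset.sum_const, hT, nsmul_eq_mul]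
    · intro j _
      exact (integrable_const (1:ℝ)).indicator (measurableSet_le (hq j) measurable_const)
  calc (n₀ : ℝ) * αc (n + 1 - n₀) = ∫ ω, ((T.filter fun j => q j ω ≤ c).card : ℝ) ∂μ := by
        rw [hg]
    _ ≤ ∫ ω, (numFalseRej n αc q T ω : ℝ) ∂μ := integral_mono_ae hintg hintV hpt
end

section
/- Let Z_n be random variables with values in [0,1] and E(Z_n) = λ for all n, where 0 < λ < 1, and suppose for every δ > 0 that limsup_n E(Z_n/(1−Z_n+δ)) ≤ λ/(1−λ). Then Z_n → λ in probability. -/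
open MeasureTheory Filter

lemma intble_of_bdd {Ω : Type} [MeasurableSpace Ω] (μ : Measure Ω) [IsProbabilityMeasure μ]
    {f : Ω → ℝ} (hf : Measurable f) (C : ℝ) (h : ∀ ω, |f ω| ≤ C) : Integrable f μ :=
  (integrable_const C).mono' hf.aestronglyMeasurable
    (ae_of_all _ (by simpa [Real.norm_eq_abs] using h))

lemma key_ineq (lam δ x : ℝ) (h0 : 0 < lam) (h1 : lam < 1) (hδ : 0 < δ) (hδ1 : δ ≤ 1)
    (hx0 : 0 ≤ x) (hx1 : x ≤ 1) :
    lam / (1 - lam + δ) + ((1 + δ) / (1 - lam + δ) ^ 2) * (x - lam) + (x - lam) ^ 2 / 4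
      ≤ x / (1 - x + δ) := by
  have ha : 0 < 1 - lam + δ := by linarith
  have hb : 0 < 1 - x + δ := by linarith
  have hid : x / (1 - x + δ) - (lam / (1 - lam + δ) + ((1 + δ) / (1 - lam + δ) ^ 2) * (x - lam))
      = (1 + δ) * (x - lam) ^ 2 / ((1 - lam + δ) ^ 2 * (1 - x + δ)) := by
    field_simp
    ring
  have hbound : (x - lam) ^ 2 / 4
      ≤ (1 + δ) * (x - lam) ^ 2 / ((1 - lam + δ) ^ 2 * (1 - x + δ)) := by
    rw [div_le_div_iff₀ (by norm_num) (by positivity)]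
    have ha2 : 1 - lam + δ ≤ 1 + δ := by linarith
    have hb2 : 1 - x + δ ≤ 1 + δ := by linarith
    have hd2 : (1 + δ) ^ 2 ≤ 4 := by nlinarith
    have h3 : (1 - lam + δ) ^ 2 * (1 - x + δ) ≤ (1 + δ) ^ 3 := by
      nlinarith [mul_le_mul (mul_le_mul ha2 ha2 ha.le (by linarith : (0:ℝ) ≤ 1 + δ)) hb2 hb.le
        (by positivity : (0:ℝ) ≤ (1 + δ) * (1 + δ))]
    have h4 : (1 + δ) ^ 3 ≤ 4 * (1 + δ) := by nlinarith
    nlinarith [mul_le_mul_of_nonneg_left (h3.trans h4) (sq_nonneg (x - lam))]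
  linarith
/-- If `Z_n ∈ [0,1]`, `E(Z_n) = λ ∈ (0,1)` and `limsup E(Z_n/(1−Z_n+δ)) ≤ λ/(1−λ)` for all
`δ > 0`, then `Z_n → λ` in probability. -/
theorem convergence_in_probability_of_jensen
    (Ω : ℕ → Type) [∀ n, MeasurableSpace (Ω n)] (μ : ∀ n, Measure (Ω n))
    [∀ n, IsProbabilityMeasure (μ n)]
    (Z : ∀ n, Ω n → ℝ) (hm : ∀ n, Measurable (Z n))
    (lam : ℝ) (h0 : 0 < lam) (h1 : lam < 1)
    (hrange : ∀ n ω, Z n ω ∈ Set.Icc (0 : ℝ) 1)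
    (hmean : ∀ n, ∫ ω, Z n ω ∂(μ n) = lam)
    (hls : ∀ δ : ℝ, 0 < δ →
      atTop.limsup (fun n => ∫ ω, Z n ω / (1 - Z n ω + δ) ∂(μ n)) ≤ lam / (1 - lam)) :
    ∀ ε : ℝ, 0 < ε →
      Tendsto (fun n => μ n {ω | ε ≤ |Z n ω - lam|}) atTop (nhds 0) := by
  intro ε hε
  rw [ENNReal.tendsto_nhds_zero]
  intro η hη
  obtain ⟨r, hr0, hrη⟩ : ∃ r : ℝ, 0 < r ∧ ENNReal.ofReal r ≤ η := by
    rcases eq_or_ne η ⊤ with h | h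
    · exact ⟨1, one_pos, by simp [h]⟩
    · exact ⟨η.toReal, ENNReal.toReal_pos hη.ne' h, by rw [ENNReal.ofReal_toReal h]⟩
  have h1l : 0 < 1 - lam := by linarith
  set δ : ℝ := min 1 (r * ε ^ 2 * (1 - lam) ^ 2 / (8 * lam)) with hδdef
  have hδ0 : 0 < δ := lt_min one_pos (by positivity)
  have hδ1 : δ ≤ 1 := min_le_left _ _
  have ha : 0 < 1 - lam + δ := by linarith
  -- gap bound
  have hgap : lam / (1 - lam) - lam / (1 - lam + δ) ≤ r * ε ^ 2 / 8 := by
    have hδle : δ ≤ r * ε ^ 2 * (1 - lam) ^ 2 / (8 * lam) := min_le_right _ _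
    have hδle' : lam * δ ≤ r * ε ^ 2 * (1 - lam) ^ 2 / 8 := by
      rw [le_div_iff₀ (by positivity)] at hδle
      rw [le_div_iff₀ (by norm_num : (0:ℝ) < 8)]
      nlinarith
    have heq : lam / (1 - lam) - lam / (1 - lam + δ) = lam * δ / ((1 - lam) * (1 - lam + δ)) := by
      field_simp; ring
    rw [heq, div_le_iff₀ (by positivity)]
    nlinarith [mul_le_mul_of_nonneg_left
      (by nlinarith : (1 - lam) ^ 2 ≤ (1 - lam) * (1 - lam + δ))
      (by positivity : (0:ℝ) ≤ r * ε ^ 2 / 8)]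
  -- integrability helpers
  have hZint : ∀ n, Integrable (Z n) (μ n) := fun n =>
    intble_of_bdd _ (hm n) 1 (fun ω => abs_le.2 ⟨by linarith [(hrange n ω).1], (hrange n ω).2⟩)
  have hfmeas : ∀ n, Measurable (fun ω => Z n ω / (1 - Z n ω + δ)) := fun n =>
    (hm n).div (((measurable_const.sub (hm n)).add_const δ))
  have hfbd : ∀ n ω, |Z n ω / (1 - Z n ω + δ)| ≤ 1 / δ := by
    intro n ω
    obtain ⟨hz0, hz1⟩ := hrange n ω
    have hb : 0 < 1 - Z n ω + δ := by linarith
    rw [abs_of_nonneg (by positivity)]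
    exact div_le_div₀ zero_le_one hz1 hδ0 (by linarith)
  have hfint : ∀ n, Integrable (fun ω => Z n ω / (1 - Z n ω + δ)) (μ n) := fun n =>
    intble_of_bdd _ (hfmeas n) (1 / δ) (hfbd n)
  have hq_int : ∀ n, Integrable (fun ω => (Z n ω - lam) ^ 2) (μ n) := fun n => by
    apply intble_of_bdd _ (((hm n).sub_const lam).pow_const 2) 1
    intro ω
    obtain ⟨hz0, hz1⟩ := hrange n ω
    rw [abs_of_nonneg (sq_nonneg _)]
    nlinarith
  -- eventual bound on the integral
  have hbdd : IsBoundedUnder (· ≤ ·) atTop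
      (fun n => ∫ ω, Z n ω / (1 - Z n ω + δ) ∂(μ n)) := by
    refine isBoundedUnder_of ⟨1 / δ, fun n => ?_⟩
    calc ∫ ω, Z n ω / (1 - Z n ω + δ) ∂(μ n)
        ≤ ∫ _ω, 1 / δ ∂(μ n) :=
          integral_mono (hfint n) (integrable_const _)
            (fun ω => (abs_le.1 (hfbd n ω)).2)
      _ = 1 / δ := by simp
  have hev : ∀ᶠ n in atTop,
      (∫ ω, Z n ω / (1 - Z n ω + δ) ∂(μ n)) < lam / (1 - lam) + r * ε ^ 2 / 8 :=
    eventually_lt_of_limsup_lt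
      (lt_of_le_of_lt (hls δ hδ0)
        (by linarith [(by positivity : (0:ℝ) < r * ε ^ 2 / 8)])) hbdd
  filter_upwards [hev] with n hn
  set ν := μ n
  set A := {ω | ε ≤ |Z n ω - lam|} with hA
  have hAm : MeasurableSet A := measurableSet_le measurable_const ((hm n).sub_const lam).abs
  set c : ℝ := (1 + δ) / (1 - lam + δ) ^ 2 with hc
  -- pointwise inequality integrated
  have hlow_int : Integrable
      (fun ω => lam / (1 - lam + δ) + c * (Z n ω - lam) + (Z n ω - lam) ^ 2 / 4) ν := by
    exact ((integrable_const _).add (((hZint n).sub (integrable_const lam)).const_mul c)).add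
      ((hq_int n).div_const 4)
  have hintmono : ∫ ω, (lam / (1 - lam + δ) + c * (Z n ω - lam) + (Z n ω - lam) ^ 2 / 4) ∂ν
      ≤ ∫ ω, Z n ω / (1 - Z n ω + δ) ∂ν :=
    integral_mono hlow_int (hfint n)
      (fun ω => key_ineq lam δ (Z n ω) h0 h1 hδ0 hδ1 (hrange n ω).1 (hrange n ω).2)
  have hsplit : ∫ ω, (lam / (1 - lam + δ) + c * (Z n ω - lam) + (Z n ω - lam) ^ 2 / 4) ∂ν
      = lam / (1 - lam + δ) + (∫ ω, (Z n ω - lam) ^ 2 ∂ν) / 4 := by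
    have i4 : Integrable (fun ω => Z n ω - lam) ν := (hZint n).sub (integrable_const lam)
    have i3 : Integrable (fun ω => c * (Z n ω - lam)) ν := i4.const_mul c
    have i1 : Integrable (fun ω => lam / (1 - lam + δ) + c * (Z n ω - lam)) ν :=
      (integrable_const _).add i3
    have i2 : Integrable (fun ω => (Z n ω - lam) ^ 2 / 4) ν := (hq_int n).div_const 4
    rw [integral_add i1 i2, integral_add (integrable_const _) i3, integral_const,
      integral_const_mul, integral_div, integral_sub (hZint n) (integrable_const lam),
      integral_const, hmean n]
    simp
  -- lower bound the quadratic term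
  have hquad : ε ^ 2 * (ν A).toReal ≤ ∫ ω, (Z n ω - lam) ^ 2 ∂ν := by
    have h1 : ε ^ 2 * (ν A).toReal ≤ ∫ ω in A, (Z n ω - lam) ^ 2 ∂ν := by
      refine setIntegral_ge_of_const_le_real hAm (measure_ne_top ν A) (fun ω hω => ?_)
        ((hq_int n).integrableOn)
      have : ε ≤ |Z n ω - lam| := hω
      calc ε ^ 2 ≤ |Z n ω - lam| ^ 2 := by nlinarith [abs_nonneg (Z n ω - lam)]
        _ = (Z n ω - lam) ^ 2 := sq_abs _
    exact h1.trans (setIntegral_le_integral (hq_int n) (ae_of_all _ fun ω => sq_nonneg _))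
  -- conclude
  have hfinal : (ν A).toReal ≤ r := by
    rw [hsplit] at hintmono
    nlinarith [hintmono, hn, hgap, hquad]
  calc μ n A = ENNReal.ofReal ((ν A).toReal) := (ENNReal.ofReal_toReal (measure_ne_top _ _)).symm
    _ ≤ ENNReal.ofReal r := ENNReal.ofReal_le_ofReal hfinal
    _ ≤ η := hrη
end
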